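/- arXiv:math/0210425 — 3 statements merged into one kernel-verified Lean document; each statement's English description precedes it below -/
import Mathlib

section
/- Let F be a distribution function, x₀ a continuity point of F, and ε > 0. If |F̂(x₀) − F(x₀)| ≥ ε for a distribution function F̂, and δ' > 0 satisfies F(x₀+δ') ≤ F(x₀) + ε/2 and F(x₀−δ') ≥ F(x₀) − ε/2, then ∫_{x₀−δ'}^{x₀+δ'} |F̂ − F| ≥ δ'ε/2. -/
open MeasureTheory intervalIntegral

/-- If `F` and `F̂` are distribution functions (nondecreasing, right-continuous, with values
in `[0,1]`), `x₀` a continuity point of `F`, `|F̂(x₀) − F(x₀)| ≥ ε` and `δ' > 0` satisfies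
`F(x₀+δ') ≤ F(x₀) + ε/2` and `F(x₀−δ') ≥ F(x₀) − ε/2`, then
`∫_{x₀−δ'}^{x₀+δ'} |F̂ − F| ≥ δ'ε/2`. -/
theorem stmt8 (F Fhat : ℝ → ℝ)
    (hF_mono : Monotone F) (hF_rc : ∀ x, ContinuousWithinAt F (Set.Ici x) x)
    (hF_mem : ∀ x, F x ∈ Set.Icc (0 : ℝ) 1)
    (hFhat_mono : Monotone Fhat) (hFhat_rc : ∀ x, ContinuousWithinAt Fhat (Set.Ici x) x)
    (hFhat_mem : ∀ x, Fhat x ∈ Set.Icc (0 : ℝ) 1)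
    (x₀ : ℝ) (hcont : ContinuousAt F x₀) (ε : ℝ) (hε : 0 < ε)
    (hsep : ε ≤ |Fhat x₀ - F x₀|)
    (δ' : ℝ) (hδ' : 0 < δ')
    (h1 : F (x₀ + δ') ≤ F x₀ + ε / 2)
    (h2 : F x₀ - ε / 2 ≤ F (x₀ - δ')) :
    δ' * ε / 2 ≤ ∫ x in (x₀ - δ')..(x₀ + δ'), |Fhat x - F x| := by
  have hA : IntervalIntegrable (fun x => |Fhat x - F x|) volume (x₀ - δ') x₀ :=
    ((hFhat_mono.intervalIntegrable.sub hF_mono.intervalIntegrable)).abs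
  have hB : IntervalIntegrable (fun x => |Fhat x - F x|) volume x₀ (x₀ + δ') :=
    ((hFhat_mono.intervalIntegrable.sub hF_mono.intervalIntegrable)).abs
  have hsplit : (∫ x in (x₀ - δ')..x₀, |Fhat x - F x|) + ∫ x in x₀..(x₀ + δ'), |Fhat x - F x|
      = ∫ x in (x₀ - δ')..(x₀ + δ'), |Fhat x - F x| :=
    integral_add_adjacent_intervals hA hB
  have hnnA : 0 ≤ ∫ x in (x₀ - δ')..x₀, |Fhat x - F x| :=
    integral_nonneg (by linarith) (fun x _ => abs_nonneg _)
  have hnnB : 0 ≤ ∫ x in x₀..(x₀ + δ'), |Fhat x - F x| :=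
    integral_nonneg (by linarith) (fun x _ => abs_nonneg _)
  rcases le_abs.mp hsep with h | h
  · have key : ∀ x ∈ Set.Icc x₀ (x₀ + δ'), (fun _ : ℝ => ε / 2) x ≤ |Fhat x - F x| := by
      intro x hx
      have hx1 : F x ≤ F (x₀ + δ') := hF_mono hx.2
      have hx2 : Fhat x₀ ≤ Fhat x := hFhat_mono hx.1
      have : ε / 2 ≤ Fhat x - F x := by linarith
      exact this.trans (le_abs_self _)
    have hmono := integral_mono_on (by linarith : x₀ ≤ x₀ + δ')
      intervalIntegrable_const hB key
    rw [intervalIntegral.integral_const, smul_eq_mul] at hmono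
    have : (x₀ + δ' - x₀) * (ε / 2) = δ' * ε / 2 := by ring
    linarith [hmono, hnnA, hsplit]
  · have key : ∀ x ∈ Set.Icc (x₀ - δ') x₀, (fun _ : ℝ => ε / 2) x ≤ |Fhat x - F x| := by
      intro x hx
      have hx1 : F (x₀ - δ') ≤ F x := hF_mono hx.1
      have hx2 : Fhat x ≤ Fhat x₀ := hFhat_mono hx.2
      have : ε / 2 ≤ -(Fhat x - F x) := by linarith
      exact this.trans (neg_le_abs _)
    have hmono := integral_mono_on (by linarith : x₀ - δ' ≤ x₀)
      intervalIntegrable_const hA key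
    rw [intervalIntegral.integral_const, smul_eq_mul] at hmono
    have : (x₀ - (x₀ - δ')) * (ε / 2) = δ' * ε / 2 := by ring
    linarith [hmono, hnnB, hsplit]
end

section
/- (Consistency of the grouped cells estimator.) Let X be multinomial(n, p_M) with M = M_n, groups 0 = k_0 < … < k_m = M. Assume m/n → 0, sup_j (k_j − k_{j−1})/M → 0, and sup_{0<u≤1}|g_M(u) − g(u)| → 0 for some g continuous on [0,1]. Then F̂_M(x) = (1/M) Σ_{j=1}^m (k_j−k_{j−1}) 1_{[M X̄_j/(n(k_j−k_{j−1})) ≤ x]} converges to F(x) in probability at every continuity point x of F, where F is the distribution function of g(U) with U uniform(0,1]. -/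
open MeasureTheory Finset Filter

/-- `X_1, …, X_M` (cells indexed by `1, …, M`) form a multinomial`(n, p)` vector:
for every vector of counts `c` with total `n`, the probability that `X_i = c_i` for all
`i = 1, …, M` equals `n! / (c_1! ⋯ c_M!) · p_1^{c_1} ⋯ p_M^{c_M}`. -/
def IsMultinomial {Ω : Type*} [MeasurableSpace Ω] (P : Measure Ω) (n M : ℕ)
    (p : ℕ → ℝ) (X : ℕ → Ω → ℕ) : Prop :=
  ∀ c : ℕ → ℕ, (∑ i ∈ Finset.Icc 1 M, c i) = n →
    (P {ω | ∀ i ∈ Finset.Icc 1 M, X i ω = c i}).toReal =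
      ((n.factorial : ℝ) / ∏ i ∈ Finset.Icc 1 M, ((c i).factorial : ℝ)) *
        ∏ i ∈ Finset.Icc 1 M, (p i) ^ (c i)

set_option maxHeartbeats 2000000

namespace Stmt16Aux

/-- multinomial pmf value -/
noncomputable def mpmf (s : Finset ℕ) (p : ℕ → ℝ) (n : ℕ) (c : ℕ → ℕ) : ℝ :=
  ((n.factorial : ℝ) / ∏ i ∈ s, ((c i).factorial : ℝ)) * ∏ i ∈ s, p i ^ c i

lemma prod_factorial_pos (s : Finset ℕ) (c : ℕ → ℕ) :
    0 < ∏ i ∈ s, ((c i).factorial : ℝ) :=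
  Finset.prod_pos fun i _ => by exact_mod_cast (c i).factorial_pos

lemma mpmf_nonneg {s : Finset ℕ} {p : ℕ → ℝ} (hp : ∀ i ∈ s, 0 ≤ p i) (n : ℕ) (c : ℕ → ℕ) :
    0 ≤ mpmf s p n c := by
  apply mul_nonneg
  · exact div_nonneg (by positivity) (prod_factorial_pos s c).le
  · exact Finset.prod_nonneg fun i hi => pow_nonneg (hp i hi) _

lemma sum_mpmf (s : Finset ℕ) (p : ℕ → ℝ) (hp : ∑ i ∈ s, p i = 1) (n : ℕ) :
    ∑ c ∈ s.piAntidiag n, mpmf s p n c = 1 := by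
  have h := Finset.sum_pow_eq_sum_piAntidiag s p n
  rw [hp, one_pow] at h
  rw [h]
  apply Finset.sum_congr rfl
  intro c hc
  rw [Finset.mem_piAntidiag] at hc
  have hspec := Nat.multinomial_spec s c
  rw [hc.1] at hspec
  have : (Nat.multinomial s c : ℝ) = (n.factorial : ℝ) / ∏ i ∈ s, ((c i).factorial : ℝ) := by
    rw [eq_div_iff (prod_factorial_pos s c).ne']
    rw [mul_comm]
    exact_mod_cast congrArg (Nat.cast (R := ℝ)) hspec
  rw [mpmf, this]
  -- done?

/-- shift lemma -/
lemma sum_piAntidiag_succ (s : Finset ℕ) (n i : ℕ) (hi : i ∈ s) (G : (ℕ → ℕ) → ℝ) :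
    ∑ c ∈ s.piAntidiag (n + 1), (c i : ℝ) * G c =
      ∑ c ∈ s.piAntidiag n, ((c i : ℝ) + 1) * G (Function.update c i (c i + 1)) := by
  rw [← Finset.sum_filter_of_ne (p := fun c => c i ≠ 0)
    (fun c _ h => by
      intro h0
      rw [h0] at h; simp at h)]
  refine (Finset.sum_nbij' (i := fun c => Function.update c i (c i + 1))
    (j := fun c => Function.update c i (c i - 1)) ?_ ?_ ?_ ?_ ?_).symm
  · intro c hc
    rw [Finset.mem_piAntidiag] at hc
    rw [Finset.mem_filter, Finset.mem_piAntidiag]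
    refine ⟨⟨?_, ?_⟩, by simp⟩
    · rw [Finset.sum_update_of_mem hi]
      have : ∑ x ∈ s, c x = c i + ∑ x ∈ s \ {i}, c x := by
        rw [← Finset.erase_eq]; exact (Finset.add_sum_erase s c hi).symm
      have hsum : ∑ x ∈ s, c x = n := hc.1
      omega
    · intro x hx
      rcases eq_or_ne x i with rfl | hxi
      · exact hi
      · simp only [Function.update_of_ne hxi] at hx
        exact hc.2 x hx
  · intro c hc
    rw [Finset.mem_filter, Finset.mem_piAntidiag] at hc
    rw [Finset.mem_piAntidiag]
    constructor
    · rw [Finset.sum_update_of_mem hi]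
      have : ∑ x ∈ s, c x = c i + ∑ x ∈ s \ {i}, c x := by
        rw [← Finset.erase_eq]; exact (Finset.add_sum_erase s c hi).symm
      have hne : c i ≠ 0 := hc.2
      have hsum : ∑ x ∈ s, c x = n + 1 := hc.1.1
      omega
    · intro x hx
      rcases eq_or_ne x i with rfl | hxi
      · exact hi
      · simp only [Function.update_of_ne hxi] at hx
        exact hc.1.2 x hx
  · intro c _
    funext x
    rcases eq_or_ne x i with rfl | hxi
    · simp
    · simp [Function.update_of_ne hxi]
  · intro c hc
    rw [Finset.mem_filter] at hc
    have hne : c i ≠ 0 := hc.2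
    funext x
    rcases eq_or_ne x i with rfl | hxi
    · simp [Nat.succ_pred_eq_of_pos (Nat.pos_of_ne_zero hne)]
      omega
    · simp [Function.update_of_ne hxi]
  · intro c _
    simp

lemma mpmf_update (s : Finset ℕ) (p : ℕ → ℝ) (n i : ℕ) (hi : i ∈ s) (c : ℕ → ℕ) :
    ((c i : ℝ) + 1) * mpmf s p (n + 1) (Function.update c i (c i + 1)) =
      ((n : ℝ) + 1) * p i * mpmf s p n c := by
  have hprodf : ∏ x ∈ s, ((Function.update c i (c i + 1) x).factorial : ℝ)
      = ((c i : ℝ) + 1) * ∏ x ∈ s, ((c x).factorial : ℝ) := by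
    rw [← Finset.mul_prod_erase s _ hi, ← Finset.mul_prod_erase s (fun x => ((c x).factorial : ℝ)) hi]
    rw [Function.update_self]
    rw [Nat.factorial_succ]
    push_cast
    rw [Finset.prod_congr rfl (fun x hx => by
      rw [Function.update_of_ne (Finset.ne_of_mem_erase hx)])]
    ring
  have hprodp : ∏ x ∈ s, p x ^ (Function.update c i (c i + 1) x)
      = p i * ∏ x ∈ s, p x ^ c x := by
    rw [← Finset.mul_prod_erase s _ hi, ← Finset.mul_prod_erase s (fun x => p x ^ c x) hi]
    rw [Function.update_self, pow_succ]
    rw [Finset.prod_congr rfl (fun x hx => by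
      rw [Function.update_of_ne (Finset.ne_of_mem_erase hx)])]
    ring
  rw [mpmf, mpmf, hprodf, hprodp, Nat.factorial_succ]
  have h1 : (0:ℝ) < ∏ x ∈ s, ((c x).factorial : ℝ) := prod_factorial_pos s c
  have h2 : ((c i : ℝ) + 1) ≠ 0 := by positivity
  field_simp
  push_cast
  ring

lemma sum_mpmf_mul (s : Finset ℕ) (p : ℕ → ℝ) (hp : ∑ x ∈ s, p x = 1) (n i : ℕ) (hi : i ∈ s)
    (G : (ℕ → ℕ) → ℝ) :
    ∑ c ∈ s.piAntidiag (n + 1), mpmf s p (n + 1) c * (c i : ℝ) * G c =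
      ((n : ℝ) + 1) * p i *
        ∑ c ∈ s.piAntidiag n, mpmf s p n c * G (Function.update c i (c i + 1)) := by
  have := sum_piAntidiag_succ s n i hi (fun c => mpmf s p (n+1) c * G c)
  calc ∑ c ∈ s.piAntidiag (n + 1), mpmf s p (n + 1) c * (c i : ℝ) * G c
      = ∑ c ∈ s.piAntidiag (n + 1), (c i : ℝ) * (mpmf s p (n+1) c * G c) := by
        apply Finset.sum_congr rfl; intro c _; ring
    _ = ∑ c ∈ s.piAntidiag n, ((c i : ℝ) + 1) *
          (mpmf s p (n+1) (Function.update c i (c i + 1)) * G (Function.update c i (c i + 1))) := this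
    _ = ((n : ℝ) + 1) * p i *
        ∑ c ∈ s.piAntidiag n, mpmf s p n c * G (Function.update c i (c i + 1)) := by
        rw [Finset.mul_sum]
        apply Finset.sum_congr rfl
        intro c _
        have := mpmf_update s p n i hi c
        calc ((c i : ℝ) + 1) * (mpmf s p (n+1) (Function.update c i (c i + 1)) * G (Function.update c i (c i + 1)))
            = (((c i : ℝ) + 1) * mpmf s p (n+1) (Function.update c i (c i + 1))) * G (Function.update c i (c i + 1)) := by ring
          _ = (((n : ℝ) + 1) * p i * mpmf s p n c) * G (Function.update c i (c i + 1)) := by rw [this]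
          _ = _ := by ring

lemma E1 (s : Finset ℕ) (p : ℕ → ℝ) (hp : ∑ x ∈ s, p x = 1) (n i : ℕ) (hi : i ∈ s) :
    ∑ c ∈ s.piAntidiag n, mpmf s p n c * (c i : ℝ) = (n : ℝ) * p i := by
  cases n with
  | zero =>
    have : ∀ c ∈ s.piAntidiag 0, mpmf s p 0 c * (c i : ℝ) = 0 := by
      intro c hc
      rw [Finset.mem_piAntidiag] at hc
      have : c i = 0 := by
        by_contra h
        have h0 : ∑ x ∈ s, c x = 0 := hc.1
        have h1 : c i ≤ ∑ x ∈ s, c x := Finset.single_le_sum (fun x _ => Nat.zero_le _) hi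
        omega
      simp [this]
    rw [Finset.sum_congr rfl this]
    simp
  | succ n =>
    have := sum_mpmf_mul s p hp n i hi (fun _ => 1)
    simp only [mul_one] at this
    rw [this, sum_mpmf s p hp n]
    push_cast
    ring

lemma E2 (s : Finset ℕ) (p : ℕ → ℝ) (hp : ∑ x ∈ s, p x = 1) (n i i' : ℕ) (hi : i ∈ s)
    (hi' : i' ∈ s) (hne : i' ≠ i) :
    ∑ c ∈ s.piAntidiag (n + 1), mpmf s p (n + 1) c * (c i : ℝ) * (c i' : ℝ) =
      ((n : ℝ) + 1) * (n : ℝ) * p i * p i' := by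
  have := sum_mpmf_mul s p hp n i hi (fun c => (c i' : ℝ))
  rw [this]
  have : ∀ c ∈ s.piAntidiag n,
      mpmf s p n c * ((Function.update c i (c i + 1) i' : ℕ) : ℝ) = mpmf s p n c * (c i' : ℝ) := by
    intro c _
    rw [Function.update_of_ne hne]
  rw [Finset.sum_congr rfl this, E1 s p hp n i' hi']
  ring

lemma E3 (s : Finset ℕ) (p : ℕ → ℝ) (hp : ∑ x ∈ s, p x = 1) (n i : ℕ) (hi : i ∈ s) :
    ∑ c ∈ s.piAntidiag (n + 1), mpmf s p (n + 1) c * (c i : ℝ) * (c i : ℝ) =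
      ((n : ℝ) + 1) * p i * ((n : ℝ) * p i + 1) := by
  have := sum_mpmf_mul s p hp n i hi (fun c => (c i : ℝ))
  rw [this]
  have : ∀ c ∈ s.piAntidiag n,
      mpmf s p n c * ((Function.update c i (c i + 1) i : ℕ) : ℝ)
        = mpmf s p n c * (c i : ℝ) + mpmf s p n c := by
    intro c _
    rw [Function.update_self]
    push_cast
    ring
  rw [Finset.sum_congr rfl this, Finset.sum_add_distrib, E1 s p hp n i hi, sum_mpmf s p hp n]


lemma sum_mpmf_Y (s T : Finset ℕ) (hT : T ⊆ s) (p : ℕ → ℝ) (hp : ∑ x ∈ s, p x = 1) (n : ℕ) :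
    ∑ c ∈ s.piAntidiag n, mpmf s p n c * (∑ i ∈ T, (c i : ℝ)) = (n : ℝ) * ∑ i ∈ T, p i := by
  calc ∑ c ∈ s.piAntidiag n, mpmf s p n c * (∑ i ∈ T, (c i : ℝ))
      = ∑ c ∈ s.piAntidiag n, ∑ i ∈ T, mpmf s p n c * (c i : ℝ) := by
        exact Finset.sum_congr rfl fun c _ => Finset.mul_sum _ _ _
    _ = ∑ i ∈ T, ∑ c ∈ s.piAntidiag n, mpmf s p n c * (c i : ℝ) := Finset.sum_comm
    _ = ∑ i ∈ T, (n : ℝ) * p i := Finset.sum_congr rfl fun i hi => E1 s p hp n i (hT hi)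
    _ = (n : ℝ) * ∑ i ∈ T, p i := (Finset.mul_sum _ _ _).symm

lemma sum_mpmf_Y_sq (s T : Finset ℕ) (hT : T ⊆ s) (p : ℕ → ℝ) (hp : ∑ x ∈ s, p x = 1) (n : ℕ) :
    ∑ c ∈ s.piAntidiag (n+1), mpmf s p (n+1) c * (∑ i ∈ T, (c i : ℝ)) * (∑ i ∈ T, (c i : ℝ))
      = ((n:ℝ)+1) * (∑ i ∈ T, p i) * ((n:ℝ) * (∑ i ∈ T, p i) + 1) := by
  have step1 : ∀ c, mpmf s p (n+1) c * (∑ i ∈ T, (c i : ℝ)) * (∑ i ∈ T, (c i : ℝ))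
      = ∑ i ∈ T, ∑ i' ∈ T, mpmf s p (n+1) c * (c i : ℝ) * (c i' : ℝ) := by
    intro c
    rw [mul_assoc, Finset.sum_mul_sum, Finset.mul_sum]
    exact Finset.sum_congr rfl fun i _ => by
      rw [Finset.mul_sum]
      exact Finset.sum_congr rfl fun i' _ => by ring
  rw [Finset.sum_congr rfl (fun c _ => step1 c)]
  rw [Finset.sum_comm]
  have swap2 : ∀ i ∈ T, ∑ c ∈ s.piAntidiag (n+1), ∑ i' ∈ T, mpmf s p (n+1) c * (c i : ℝ) * (c i' : ℝ)
      = ∑ i' ∈ T, ∑ c ∈ s.piAntidiag (n+1), mpmf s p (n+1) c * (c i : ℝ) * (c i' : ℝ) :=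
    fun i _ => Finset.sum_comm
  rw [Finset.sum_congr rfl swap2]
  have inner : ∀ i ∈ T, ∑ i' ∈ T, ∑ c ∈ s.piAntidiag (n+1), mpmf s p (n+1) c * (c i : ℝ) * (c i' : ℝ)
      = ((n:ℝ)+1) * p i * ((n:ℝ) * (∑ x ∈ T, p x) + 1) := by
    intro i hiT
    have hiS : i ∈ s := hT hiT
    rw [← Finset.add_sum_erase T _ hiT]
    have hdiag := E3 s p hp n i hiS
    have hoff : ∀ i' ∈ T.erase i, ∑ c ∈ s.piAntidiag (n+1), mpmf s p (n+1) c * (c i : ℝ) * (c i' : ℝ)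
        = ((n:ℝ)+1) * (n:ℝ) * p i * p i' := by
      intro i' hi'
      exact E2 s p hp n i i' hiS (hT (Finset.mem_of_mem_erase hi')) (Finset.ne_of_mem_erase hi')
    rw [hdiag, Finset.sum_congr rfl hoff, ← Finset.mul_sum]
    have herase : ∑ i' ∈ T.erase i, p i' = (∑ x ∈ T, p x) - p i := by
      have := Finset.add_sum_erase T p hiT
      linarith
    rw [herase]
    ring
  rw [Finset.sum_congr rfl inner, ← Finset.sum_mul, ← Finset.mul_sum]

lemma var_mpmf (s T : Finset ℕ) (hT : T ⊆ s) (p : ℕ → ℝ) (hp : ∑ x ∈ s, p x = 1) (n : ℕ) :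
    ∑ c ∈ s.piAntidiag (n+1), mpmf s p (n+1) c *
        ((∑ i ∈ T, (c i : ℝ)) - ((n:ℝ)+1) * (∑ i ∈ T, p i))^2
      = ((n:ℝ)+1) * (∑ i ∈ T, p i) * (1 - ∑ i ∈ T, p i) := by
  set A : ℝ := ((n:ℝ)+1) * (∑ i ∈ T, p i) with hA
  have expand : ∀ c ∈ s.piAntidiag (n+1), mpmf s p (n+1) c *
        ((∑ i ∈ T, (c i : ℝ)) - A)^2
      = mpmf s p (n+1) c * (∑ i ∈ T, (c i : ℝ)) * (∑ i ∈ T, (c i : ℝ))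
        - 2 * A * (mpmf s p (n+1) c * (∑ i ∈ T, (c i : ℝ))) + A^2 * mpmf s p (n+1) c := by
    intro c _; ring
  rw [Finset.sum_congr rfl expand, Finset.sum_add_distrib, Finset.sum_sub_distrib,
    ← Finset.mul_sum, ← Finset.mul_sum, sum_mpmf_Y_sq s T hT p hp n,
    sum_mpmf_Y s T hT p hp (n+1), sum_mpmf s p hp (n+1)]
  push_cast
  ring


open MeasureTheory in
lemma measure_le_sum_filter {Ω : Type*} [MeasurableSpace Ω] (P : Measure Ω)
    [IsProbabilityMeasure P] (N M : ℕ) (p : ℕ → ℝ) (hp : ∑ i ∈ Finset.Icc 1 M, p i = 1)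
    (X : ℕ → Ω → ℕ) (hmeas : ∀ i, Measurable (X i))
    (hmult : IsMultinomial P N M p X) (Q : (ℕ → ℕ) → Prop) [DecidablePred Q] (A : Set Ω)
    (hA : ∀ ω ∈ A, Q (fun i => if i ∈ Finset.Icc 1 M then X i ω else 0)) :
    P A ≤ ENNReal.ofReal (∑ c ∈ ((Finset.Icc 1 M).piAntidiag N).filter Q,
      mpmf (Finset.Icc 1 M) p N c) := by
  classical
  set s : Finset ℕ := Finset.Icc 1 M with hs
  set D : Finset (ℕ → ℕ) := s.piAntidiag N with hD
  set atom : (ℕ → ℕ) → Set Ω := fun c => {ω | ∀ i ∈ s, X i ω = c i} with hatom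
  have hatom_meas : ∀ c, MeasurableSet (atom c) := by
    intro c
    have : atom c = ⋂ i ∈ s, (X i) ⁻¹' {c i} := by
      ext ω; simp [hatom, Set.mem_iInter]
    rw [this]
    exact MeasurableSet.biInter (Finset.countable_toSet s)
      (fun i _ => (hmeas i) (measurableSet_singleton _))
  have hatom_val : ∀ c ∈ D, P (atom c) = ENNReal.ofReal (mpmf s p N c) := by
    intro c hc
    rw [Finset.mem_piAntidiag] at hc
    have := hmult c hc.1
    rw [mpmf, ← this, ENNReal.ofReal_toReal (measure_ne_top P _)]
  have hmpmf_nonneg : ∀ c ∈ D, 0 ≤ mpmf s p N c := by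
    intro c hc
    rw [Finset.mem_piAntidiag] at hc
    rw [mpmf, ← hmult c hc.1]
    exact ENNReal.toReal_nonneg
  have hdisj : (D : Set (ℕ → ℕ)).PairwiseDisjoint atom := by
    intro c hc c' hc' hne
    simp only [Set.disjoint_left]
    intro ω hω hω'
    apply hne
    funext i
    by_cases hi : i ∈ s
    · rw [← hω i hi, ← hω' i hi]
    · rw [Finset.mem_coe, hD, Finset.mem_piAntidiag] at hc hc'
      have h1 : c i = 0 := by by_contra h; exact hi (hc.2 i h)
      have h2 : c' i = 0 := by by_contra h; exact hi (hc'.2 i h)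
      rw [h1, h2]
  have hGood : P (⋃ c ∈ D, atom c) = 1 := by
    rw [measure_biUnion_finset hdisj (fun c _ => hatom_meas c)]
    rw [Finset.sum_congr rfl hatom_val, ← ENNReal.ofReal_sum_of_nonneg hmpmf_nonneg]
    rw [hD, hs, sum_mpmf _ _ hp]
    simp
  have hcompl : P (⋃ c ∈ D, atom c)ᶜ = 0 := by
    have hms : MeasurableSet (⋃ c ∈ D, atom c) :=
      MeasurableSet.biUnion (Finset.countable_toSet D) (fun c _ => hatom_meas c)
    rw [measure_compl hms (measure_ne_top P _), measure_univ, hGood, tsub_self]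
  have hsub : A ∩ (⋃ c ∈ D, atom c) ⊆ ⋃ c ∈ D.filter Q, atom c := by
    rintro ω ⟨hωA, hωG⟩
    simp only [Set.mem_iUnion] at hωG ⊢
    obtain ⟨c, hc, hωc⟩ := hωG
    have hc' := hc
    rw [hD, Finset.mem_piAntidiag] at hc'
    have hceq : c = fun i => if i ∈ s then X i ω else 0 := by
      funext i
      by_cases hi : i ∈ s
      · rw [if_pos hi, hωc i hi]
      · rw [if_neg hi]
        by_contra h
        exact hi (hc'.2 i h)
    refine ⟨c, Finset.mem_filter.2 ⟨hc, ?_⟩, hωc⟩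
    rw [hceq]
    exact hA ω hωA
  calc P A ≤ P (A ∩ (⋃ c ∈ D, atom c)) + P (⋃ c ∈ D, atom c)ᶜ := by
        refine le_trans (measure_mono ?_) (measure_union_le _ _)
        intro ω hω
        by_cases h : ω ∈ (⋃ c ∈ D, atom c)
        · exact Or.inl ⟨hω, h⟩
        · exact Or.inr h
    _ = P (A ∩ (⋃ c ∈ D, atom c)) := by rw [hcompl, add_zero]
    _ ≤ P (⋃ c ∈ D.filter Q, atom c) := measure_mono hsub
    _ ≤ ∑ c ∈ D.filter Q, P (atom c) := measure_biUnion_finset_le _ _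
    _ = ∑ c ∈ D.filter Q, ENNReal.ofReal (mpmf s p N c) :=
        Finset.sum_congr rfl (fun c hc => hatom_val c (Finset.mem_filter.1 hc).1)
    _ = ENNReal.ofReal (∑ c ∈ D.filter Q, mpmf s p N c) :=
        (ENNReal.ofReal_sum_of_nonneg (fun c hc => hmpmf_nonneg c (Finset.mem_filter.1 hc).1)).symm


lemma cheb (s T : Finset ℕ) (hT : T ⊆ s) (p : ℕ → ℝ) (hp : ∑ x ∈ s, p x = 1)
    (hp0 : ∀ i ∈ s, 0 ≤ p i) (N : ℕ) (Mr Δ δ a : ℝ) (hMr : 0 < Mr) (hΔ : 0 < Δ)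
    (hδ : 0 < δ) (ha : a = Mr * (∑ i ∈ T, p i) / Δ) :
    ∑ c ∈ s.piAntidiag (N+1), mpmf s p (N+1) c *
        (if δ < |Mr * (∑ i ∈ T, (c i : ℝ)) / (((N:ℝ)+1) * Δ) - a| then 1 else 0)
      ≤ (∑ i ∈ T, p i) * Mr^2 / (((N:ℝ)+1) * Δ^2 * δ^2) := by
  have hN1 : (0:ℝ) < (N:ℝ)+1 := by positivity
  have hpbar0 : 0 ≤ ∑ i ∈ T, p i := Finset.sum_nonneg (fun i hi => hp0 i (hT hi))
  have hpbar1 : (∑ i ∈ T, p i) ≤ 1 := by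
    rw [← hp]
    exact Finset.sum_le_sum_of_subset_of_nonneg hT (fun i hi _ => hp0 i hi)
  set K : ℝ := ((N:ℝ)+1) * Δ * δ / Mr with hK
  have hK0 : 0 < K := by positivity
  have pointwise : ∀ c ∈ s.piAntidiag (N+1), mpmf s p (N+1) c *
      (if δ < |Mr * (∑ i ∈ T, (c i : ℝ)) / (((N:ℝ)+1) * Δ) - a| then 1 else 0)
      ≤ mpmf s p (N+1) c * (((∑ i ∈ T, (c i : ℝ)) - ((N:ℝ)+1) * (∑ i ∈ T, p i))^2 / K^2) := by
    intro c hc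
    have hm0 : 0 ≤ mpmf s p (N+1) c := mpmf_nonneg hp0 _ _
    by_cases hbad : δ < |Mr * (∑ i ∈ T, (c i : ℝ)) / (((N:ℝ)+1) * Δ) - a|
    · rw [if_pos hbad, mul_one]
      have hone : (1:ℝ) ≤ ((∑ i ∈ T, (c i : ℝ)) - ((N:ℝ)+1) * (∑ i ∈ T, p i))^2 / K^2 := by
        have heq : Mr * (∑ i ∈ T, (c i : ℝ)) / (((N:ℝ)+1) * Δ) - a
            = (Mr / (((N:ℝ)+1) * Δ)) * ((∑ i ∈ T, (c i : ℝ)) - ((N:ℝ)+1) * (∑ i ∈ T, p i)) := by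
          rw [ha]
          field_simp
        rw [heq, abs_mul, abs_of_pos (show (0:ℝ) < Mr / (((N:ℝ)+1) * Δ) by positivity)] at hbad
        have h3 : δ * (((N:ℝ)+1) * Δ) <
            Mr * |(∑ i ∈ T, (c i : ℝ)) - ((N:ℝ)+1) * (∑ i ∈ T, p i)| := by
          rw [div_mul_eq_mul_div] at hbad
          exact (lt_div_iff₀ (by positivity)).1 hbad
        have key : K ≤ |(∑ i ∈ T, (c i : ℝ)) - ((N:ℝ)+1) * (∑ i ∈ T, p i)| := by
          rw [hK, div_le_iff₀ hMr]
          nlinarith [h3]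
        have h4 : K * K ≤ |(∑ i ∈ T, (c i : ℝ)) - ((N:ℝ)+1) * (∑ i ∈ T, p i)| *
            |(∑ i ∈ T, (c i : ℝ)) - ((N:ℝ)+1) * (∑ i ∈ T, p i)| :=
          mul_le_mul key key hK0.le (abs_nonneg _)
        rw [abs_mul_abs_self] at h4
        rw [le_div_iff₀ (by positivity : (0:ℝ) < K^2)]
        nlinarith [h4]
      exact le_mul_of_one_le_right hm0 hone
    · rw [if_neg hbad, mul_zero]
      positivity
  calc ∑ c ∈ s.piAntidiag (N+1), mpmf s p (N+1) c *
        (if δ < |Mr * (∑ i ∈ T, (c i : ℝ)) / (((N:ℝ)+1) * Δ) - a| then 1 else 0)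
      ≤ ∑ c ∈ s.piAntidiag (N+1), mpmf s p (N+1) c *
          (((∑ i ∈ T, (c i : ℝ)) - ((N:ℝ)+1) * (∑ i ∈ T, p i))^2 / K^2) :=
        Finset.sum_le_sum pointwise
    _ = (∑ c ∈ s.piAntidiag (N+1), mpmf s p (N+1) c *
          ((∑ i ∈ T, (c i : ℝ)) - ((N:ℝ)+1) * (∑ i ∈ T, p i))^2) / K^2 := by
        rw [Finset.sum_div]
        exact Finset.sum_congr rfl fun c _ => by ring
    _ = (((N:ℝ)+1) * (∑ i ∈ T, p i) * (1 - ∑ i ∈ T, p i)) / K^2 := by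
        rw [var_mpmf s T hT p hp N]
    _ ≤ (((N:ℝ)+1) * (∑ i ∈ T, p i)) / K^2 := by
        have hnum : ((N:ℝ)+1) * (∑ i ∈ T, p i) * (1 - ∑ i ∈ T, p i)
            ≤ ((N:ℝ)+1) * (∑ i ∈ T, p i) := by nlinarith [mul_nonneg (mul_nonneg hN1.le hpbar0) hpbar0]
        exact div_le_div_of_nonneg_right hnum (by positivity)
    _ = (∑ i ∈ T, p i) * Mr^2 / (((N:ℝ)+1) * Δ^2 * δ^2) := by
        rw [hK]
        field_simp

lemma markov_sum {ι : Type*} (D : Finset ι) (f : ι → ℝ) (hf : ∀ c ∈ D, 0 ≤ f c)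
    (J : Finset ℕ) (w : ℕ → ℝ) (hw : ∀ j ∈ J, 0 ≤ w j) (ind : ℕ → ι → ℝ)
    (hind0 : ∀ j c, 0 ≤ ind j c) (θ : ℝ) (hθ : 0 < θ)
    (Q : ι → Prop) [DecidablePred Q] (hQ : ∀ c, Q c → θ ≤ ∑ j ∈ J, w j * ind j c) :
    ∑ c ∈ D.filter Q, f c ≤ (1/θ) * ∑ j ∈ J, w j * ∑ c ∈ D, f c * ind j c := by
  have step1 : ∑ c ∈ D.filter Q, f c ≤
      ∑ c ∈ D.filter Q, f c * ((1/θ) * ∑ j ∈ J, w j * ind j c) := by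
    apply Finset.sum_le_sum
    intro c hc
    rw [Finset.mem_filter] at hc
    have h1 : 1 ≤ (1/θ) * ∑ j ∈ J, w j * ind j c := by
      rw [one_div, inv_mul_eq_div, le_div_iff₀ hθ, one_mul]
      exact hQ c hc.2
    calc f c = f c * 1 := (mul_one _).symm
      _ ≤ f c * ((1/θ) * ∑ j ∈ J, w j * ind j c) :=
          mul_le_mul_of_nonneg_left h1 (hf c hc.1)
  have step2 : ∑ c ∈ D.filter Q, f c * ((1/θ) * ∑ j ∈ J, w j * ind j c) ≤
      ∑ c ∈ D, f c * ((1/θ) * ∑ j ∈ J, w j * ind j c) := by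
    apply Finset.sum_le_sum_of_subset_of_nonneg (Finset.filter_subset _ _)
    intro c hc _
    have : 0 ≤ ∑ j ∈ J, w j * ind j c :=
      Finset.sum_nonneg fun j hj => mul_nonneg (hw j hj) (hind0 j c)
    have := hf c hc
    positivity
  have step3 : ∑ c ∈ D, f c * ((1/θ) * ∑ j ∈ J, w j * ind j c) =
      (1/θ) * ∑ j ∈ J, w j * ∑ c ∈ D, f c * ind j c := by
    calc ∑ c ∈ D, f c * ((1/θ) * ∑ j ∈ J, w j * ind j c)
        = ∑ c ∈ D, ∑ j ∈ J, (1/θ) * (w j * (f c * ind j c)) := by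
          refine Finset.sum_congr rfl fun c _ => ?_
          rw [← mul_assoc, Finset.mul_sum]
          exact Finset.sum_congr rfl fun j _ => by ring
      _ = ∑ j ∈ J, ∑ c ∈ D, (1/θ) * (w j * (f c * ind j c)) := Finset.sum_comm
      _ = (1/θ) * ∑ j ∈ J, w j * ∑ c ∈ D, f c * ind j c := by
          rw [Finset.mul_sum]
          refine Finset.sum_congr rfl fun j _ => ?_
          rw [Finset.mul_sum, Finset.mul_sum]
  linarith [step1, step2, le_of_eq step3]


lemma k_mono (k : ℕ → ℕ) (m : ℕ) (h : ∀ j < m, k j < k (j + 1)) :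
    ∀ a b, a ≤ b → b ≤ m → k a ≤ k b := by
  intro a b hab hbm
  induction b with
  | zero =>
    have : a = 0 := by omega
    rw [this]
  | succ b ih =>
    rcases Nat.eq_or_lt_of_le hab with rfl | hlt
    · exact le_rfl
    · exact le_trans (ih (by omega) (by omega)) (le_of_lt (h b (by omega)))

lemma k_mono_zero (k : ℕ → ℕ) (m : ℕ) (h : ∀ j < m, k j < k (j + 1)) :
    ∀ a b, a ≤ b → b ≤ m → k a ≤ k b := k_mono k m h

lemma Ioc_cover (f : ℕ → ℝ) (l : ℕ) :
    Set.Ioc (f 0) (f l) ⊆ ⋃ j ∈ Finset.Icc 1 l, Set.Ioc (f (j - 1)) (f j) := by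
  induction l with
  | zero => simp
  | succ l ih =>
    intro u hu
    rcases le_or_gt u (f l) with h | h
    · have : u ∈ Set.Ioc (f 0) (f l) := ⟨hu.1, h⟩
      have := ih this
      simp only [Set.mem_iUnion] at this ⊢
      obtain ⟨j, hj, hju⟩ := this
      exact ⟨j, Finset.mem_Icc.2 ⟨(Finset.mem_Icc.1 hj).1, le_trans (Finset.mem_Icc.1 hj).2 (by omega)⟩, hju⟩
    · simp only [Set.mem_iUnion]
      refine ⟨l + 1, Finset.mem_Icc.2 ⟨by omega, le_rfl⟩, ?_⟩
      simpa using ⟨h, hu.2⟩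


lemma gM_at (Mn : ℕ) (hMn : 0 < Mn) (p : ℕ → ℝ) (i : ℕ) (hi : i ∈ Finset.Icc 1 Mn) :
    ∑ i' ∈ Finset.Icc 1 Mn, (Mn : ℝ) * p i' *
      (if ((i:ℝ)/(Mn:ℝ)) ∈ Set.Ioc (((i':ℝ) - 1) / (Mn:ℝ)) ((i':ℝ) / (Mn:ℝ)) then (1:ℝ) else 0)
    = (Mn : ℝ) * p i := by
  have hMr : (0:ℝ) < Mn := by exact_mod_cast hMn
  have key : ∀ i' ∈ Finset.Icc 1 Mn, (Mn : ℝ) * p i' *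
      (if ((i:ℝ)/(Mn:ℝ)) ∈ Set.Ioc (((i':ℝ) - 1) / (Mn:ℝ)) ((i':ℝ) / (Mn:ℝ)) then (1:ℝ) else 0)
      = if i' = i then (Mn : ℝ) * p i' else 0 := by
    intro i' _
    by_cases h : i' = i
    · subst h
      rw [if_pos, if_pos rfl, mul_one]
      constructor
      · rw [div_lt_div_iff₀ hMr hMr]
        nlinarith
      · exact le_rfl
    · rw [if_neg, if_neg h, mul_zero]
      intro hmem
      rw [Set.mem_Ioc, div_lt_div_iff₀ hMr hMr, div_le_div_iff₀ hMr hMr] at hmem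
      have h1 : (i':ℝ) - 1 < (i:ℝ) := by nlinarith [hmem.1]
      have h2 : (i:ℝ) ≤ (i':ℝ) := by nlinarith [hmem.2]
      have : i' = i := by
        have hh1 : (i':ℝ) < (i:ℝ) + 1 := by linarith
        have hh2 : i' < i + 1 := by exact_mod_cast hh1
        have hh3 : i ≤ i' := by exact_mod_cast h2
        omega
      exact h this
  rw [Finset.sum_congr rfl key, Finset.sum_ite_eq' (Finset.Icc 1 Mn) i (fun i' => (Mn : ℝ) * p i'),
    if_pos hi]


open MeasureTheory in
lemma per_t {Ω : Type*} [MeasurableSpace Ω] (P : Measure Ω) [IsProbabilityMeasure P]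
    (Nn Mn mn : ℕ) (hMn : 0 < Mn)
    (pt : ℕ → ℝ) (hp0 : ∀ i ∈ Finset.Icc 1 Mn, 0 ≤ pt i)
    (hp1 : ∑ i ∈ Finset.Icc 1 Mn, pt i = 1)
    (Xt : ℕ → Ω → ℕ) (hmeasX : ∀ i, Measurable (Xt i))
    (hmultX : IsMultinomial P (Nn + 1) Mn pt Xt)
    (kt : ℕ → ℕ) (hk0 : kt 0 = 0) (hkmn : kt mn = Mn) (hkmo : ∀ j < mn, kt j < kt (j + 1))
    (g F : ℝ → ℝ) (x ε δ η θ ρ C₀ : ℝ)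
    (hδ : 0 < δ) (hη : 0 < η) (hθ : 0 < θ) (hρ : 0 < ρ) (hε : 0 < ε)
    (hC₀ : ∀ u ∈ Set.Icc (0:ℝ) 1, ‖g u‖ ≤ C₀)
    (hgmod : ∀ u ∈ Set.Icc (0:ℝ) 1, ∀ v ∈ Set.Icc (0:ℝ) 1, dist u v < ρ → dist (g u) (g v) < η / 2)
    (gMt : ℝ → ℝ)
    (hgMt : ∀ u : ℝ, gMt u = ∑ i ∈ Finset.Icc 1 Mn, (Mn : ℝ) * pt i *
      (if u ∈ Set.Ioc (((i : ℝ) - 1) / (Mn : ℝ)) ((i : ℝ) / (Mn : ℝ)) then (1:ℝ) else 0))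
    (hsupt : ∀ u ∈ Set.Ioc (0:ℝ) 1, |gMt u - g u| ≤ η / 2)
    (hgr : ∀ j ∈ Finset.Icc 1 mn, ((kt j : ℝ) - kt (j - 1)) / (Mn : ℝ) ≤ ρ / 2)
    (hFdef : ∀ y, F y = ((volume.restrict (Set.Ioc (0:ℝ) 1)) {u | g u ≤ y}).toReal)
    (hFup : F (x + (δ + η)) ≤ F x + ε - θ) (hFlo : F x - ε + θ ≤ F (x - (δ + η)))
    (Fh : Ω → ℝ)
    (hFh : ∀ ω, Fh ω = (1 / (Mn : ℝ)) * ∑ j ∈ Finset.Icc 1 mn, ((kt j : ℝ) - kt (j - 1)) *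
      (if (Mn : ℝ) * (∑ i ∈ Finset.Ioc (kt (j - 1)) (kt j), (Xt i ω : ℝ)) /
          (((Nn : ℝ) + 1) * ((kt j : ℝ) - kt (j - 1))) ≤ x then (1:ℝ) else 0)) :
    P {ω | ε < |Fh ω - F x|} ≤
      ENNReal.ofReal ((1 / θ) * ((mn : ℝ) * (C₀ + η)) / (((Nn : ℝ) + 1) * δ ^ 2)) := by
  classical
  have hMr : (0:ℝ) < (Mn : ℝ) := by exact_mod_cast hMn
  have hNr : (0:ℝ) < (Nn : ℝ) + 1 := by positivity
  -- basic structure facts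
  have hkmon : ∀ a b, a ≤ b → b ≤ mn → kt a ≤ kt b := k_mono kt mn hkmo
  have hkM : ∀ j, j ≤ mn → kt j ≤ Mn := fun j hj => hkmn ▸ hkmon j mn hj le_rfl
  have hΔnat : ∀ j ∈ Finset.Icc 1 mn, kt (j - 1) < kt j := by
    intro j hj
    rw [Finset.mem_Icc] at hj
    have h := hkmo (j - 1) (by omega)
    have hj1 : j - 1 + 1 = j := by omega
    rwa [hj1] at h
  have hΔpos : ∀ j ∈ Finset.Icc 1 mn, (0:ℝ) < (kt j : ℝ) - kt (j - 1) := by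
    intro j hj
    have := hΔnat j hj
    have : (kt (j-1) : ℝ) < kt j := by exact_mod_cast this
    linarith
  have hTsub : ∀ j ∈ Finset.Icc 1 mn, Finset.Ioc (kt (j - 1)) (kt j) ⊆ Finset.Icc 1 Mn := by
    intro j hj i hi
    rw [Finset.mem_Ioc] at hi
    rw [Finset.mem_Icc]
    rw [Finset.mem_Icc] at hj
    exact ⟨by omega, le_trans hi.2 (hkM j hj.2)⟩
  have hcardT : ∀ j ∈ Finset.Icc 1 mn,
      ((Finset.Ioc (kt (j - 1)) (kt j)).card : ℝ) = (kt j : ℝ) - kt (j - 1) := by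
    intro j hj
    rw [Nat.card_Ioc]
    have := hΔnat j hj
    push_cast [Nat.cast_sub (le_of_lt this)]
    ring
  -- abbreviation for interval endpoints
  have hIoc01 : ∀ j ∈ Finset.Icc 1 mn,
      Set.Ioc ((kt (j-1) : ℝ) / Mn) ((kt j : ℝ) / Mn) ⊆ Set.Ioc (0:ℝ) 1 := by
    intro j hj u hu
    rw [Finset.mem_Icc] at hj
    constructor
    · exact lt_of_le_of_lt (by positivity) hu.1
    · refine le_trans hu.2 ?_
      rw [div_le_one hMr]
      exact_mod_cast hkM j hj.2
  -- closeness of cell averages to g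
  have hclose : ∀ j ∈ Finset.Icc 1 mn, ∀ u ∈ Set.Ioc ((kt (j-1) : ℝ) / Mn) ((kt j : ℝ) / Mn),
      |(Mn : ℝ) * (∑ i ∈ Finset.Ioc (kt (j - 1)) (kt j), pt i) / ((kt j : ℝ) - kt (j - 1)) - g u|
        ≤ η := by
    intro j hj u hu
    have hu01 : u ∈ Set.Ioc (0:ℝ) 1 := hIoc01 j hj hu
    have hΔj : (0:ℝ) < (kt j : ℝ) - kt (j - 1) := hΔpos j hj
    have hcell : ∀ i ∈ Finset.Ioc (kt (j - 1)) (kt j), |(Mn : ℝ) * pt i - g u| ≤ η := by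
      intro i hi
      have hiIcc : i ∈ Finset.Icc 1 Mn := hTsub j hj hi
      rw [Finset.mem_Ioc] at hi
      have hi1 : 1 ≤ i := by omega
      have hiM : i ≤ Mn := (Finset.mem_Icc.1 hiIcc).2
      have hxm : (i:ℝ) / Mn ∈ Set.Ioc ((kt (j-1) : ℝ) / Mn) ((kt j : ℝ) / Mn) := by
        constructor
        · rw [div_lt_div_iff₀ hMr hMr]
          have : (kt (j-1) : ℝ) < i := by exact_mod_cast hi.1
          nlinarith
        · rw [div_le_div_iff₀ hMr hMr]
          have : (i : ℝ) ≤ kt j := by exact_mod_cast hi.2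
          nlinarith
      have hx01 : (i:ℝ) / Mn ∈ Set.Ioc (0:ℝ) 1 := hIoc01 j hj hxm
      have hgMval : gMt ((i:ℝ) / Mn) = (Mn : ℝ) * pt i := by
        rw [hgMt]
        exact gM_at Mn hMn pt i hiIcc
      have h1 : |gMt ((i:ℝ) / Mn) - g ((i:ℝ) / Mn)| ≤ η / 2 := hsupt _ hx01
      have hdist : dist ((i:ℝ) / Mn) u < ρ := by
        rw [Real.dist_eq]
        have hg2 := hgr j hj
        have hb1 := hxm.1
        have hb2 := hxm.2
        have hb3 := hu.1
        have hb4 := hu.2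
        rw [abs_lt]
        constructor
        · have : u - (i:ℝ)/Mn ≤ (kt j : ℝ)/Mn - (kt (j-1) : ℝ)/Mn := by linarith
          have heq : (kt j : ℝ)/Mn - (kt (j-1) : ℝ)/Mn = ((kt j : ℝ) - kt (j-1))/Mn := by ring
          rw [heq] at this
          linarith
        · have : (i:ℝ)/Mn - u ≤ (kt j : ℝ)/Mn - (kt (j-1) : ℝ)/Mn := by linarith
          have heq : (kt j : ℝ)/Mn - (kt (j-1) : ℝ)/Mn = ((kt j : ℝ) - kt (j-1))/Mn := by ring
          rw [heq] at this
          linarith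
      have h2 : |g ((i:ℝ) / Mn) - g u| ≤ η / 2 := by
        have := hgmod ((i:ℝ)/Mn) (Set.Ioc_subset_Icc_self hx01) u (Set.Ioc_subset_Icc_self hu01) hdist
        rw [Real.dist_eq] at this
        linarith
      calc |(Mn : ℝ) * pt i - g u| = |gMt ((i:ℝ)/Mn) - g u| := by rw [hgMval]
        _ ≤ |gMt ((i:ℝ)/Mn) - g ((i:ℝ)/Mn)| + |g ((i:ℝ)/Mn) - g u| := abs_sub_le _ _ _
        _ ≤ η / 2 + η / 2 := add_le_add h1 h2
        _ = η := by ring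
    have hsumeq : (Mn : ℝ) * (∑ i ∈ Finset.Ioc (kt (j - 1)) (kt j), pt i)
        - ((kt j : ℝ) - kt (j - 1)) * g u
        = ∑ i ∈ Finset.Ioc (kt (j - 1)) (kt j), ((Mn : ℝ) * pt i - g u) := by
      rw [Finset.sum_sub_distrib, ← Finset.mul_sum, Finset.sum_const, nsmul_eq_mul,
        hcardT j hj]
    have habs : |(Mn : ℝ) * (∑ i ∈ Finset.Ioc (kt (j - 1)) (kt j), pt i)
        - ((kt j : ℝ) - kt (j - 1)) * g u| ≤ ((kt j : ℝ) - kt (j - 1)) * η := by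
      rw [hsumeq]
      calc |∑ i ∈ Finset.Ioc (kt (j - 1)) (kt j), ((Mn : ℝ) * pt i - g u)|
          ≤ ∑ i ∈ Finset.Ioc (kt (j - 1)) (kt j), |(Mn : ℝ) * pt i - g u| :=
            Finset.abs_sum_le_sum_abs _ _
        _ ≤ ∑ _i ∈ Finset.Ioc (kt (j - 1)) (kt j), η := Finset.sum_le_sum hcell
        _ = ((kt j : ℝ) - kt (j - 1)) * η := by
            rw [Finset.sum_const, nsmul_eq_mul, hcardT j hj]
    have heq2 : (Mn : ℝ) * (∑ i ∈ Finset.Ioc (kt (j - 1)) (kt j), pt i) /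
        ((kt j : ℝ) - kt (j - 1)) - g u
        = ((Mn : ℝ) * (∑ i ∈ Finset.Ioc (kt (j - 1)) (kt j), pt i)
          - ((kt j : ℝ) - kt (j - 1)) * g u) / ((kt j : ℝ) - kt (j - 1)) := by
      field_simp
    rw [heq2, abs_div, abs_of_pos hΔj, div_le_iff₀ hΔj]
    linarith [habs]
  -- A j bounded by C₀ + η
  have hAC : ∀ j ∈ Finset.Icc 1 mn,
      (Mn : ℝ) * (∑ i ∈ Finset.Ioc (kt (j - 1)) (kt j), pt i) / ((kt j : ℝ) - kt (j - 1))
        ≤ C₀ + η := by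
    intro j hj
    have hΔj : (0:ℝ) < (kt j : ℝ) - kt (j - 1) := hΔpos j hj
    have hum : (kt j : ℝ) / Mn ∈ Set.Ioc ((kt (j-1) : ℝ) / Mn) ((kt j : ℝ) / Mn) := by
      constructor
      · rw [div_lt_div_iff₀ hMr hMr]
        nlinarith
      · exact le_rfl
    have hu01 : (kt j : ℝ) / Mn ∈ Set.Ioc (0:ℝ) 1 := hIoc01 j hj hum
    have hcl := hclose j hj _ hum
    have hb := hC₀ _ (Set.Ioc_subset_Icc_self hu01)
    rw [Real.norm_eq_abs] at hb
    have h1 : (Mn : ℝ) * (∑ i ∈ Finset.Ioc (kt (j - 1)) (kt j), pt i) /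
        ((kt j : ℝ) - kt (j - 1)) - g ((kt j : ℝ) / Mn) ≤ η := le_trans (le_abs_self _) hcl
    have h2 : g ((kt j : ℝ) / Mn) ≤ C₀ := le_trans (le_abs_self _) hb
    linarith
  -- comparison G ≤ F above
  have hGF1 : ∑ j ∈ Finset.Icc 1 mn, (((kt j : ℝ) - kt (j - 1)) / Mn) *
      (if (Mn : ℝ) * (∑ i ∈ Finset.Ioc (kt (j - 1)) (kt j), pt i) / ((kt j : ℝ) - kt (j - 1))
        ≤ x + δ then (1:ℝ) else 0) ≤ F (x + (δ + η)) := by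
    classical
    set J' : Finset ℕ := (Finset.Icc 1 mn).filter (fun j =>
      (Mn : ℝ) * (∑ i ∈ Finset.Ioc (kt (j - 1)) (kt j), pt i) / ((kt j : ℝ) - kt (j - 1))
        ≤ x + δ) with hJ'
    have hstep : ∑ j ∈ Finset.Icc 1 mn, (((kt j : ℝ) - kt (j - 1)) / Mn) *
        (if (Mn : ℝ) * (∑ i ∈ Finset.Ioc (kt (j - 1)) (kt j), pt i) / ((kt j : ℝ) - kt (j - 1))
          ≤ x + δ then (1:ℝ) else 0)
        = ∑ j ∈ J', (((kt j : ℝ) - kt (j - 1)) / Mn) := by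
      rw [hJ', Finset.sum_filter]
      refine Finset.sum_congr rfl fun j _ => ?_
      by_cases h : (Mn : ℝ) * (∑ i ∈ Finset.Ioc (kt (j - 1)) (kt j), pt i) /
          ((kt j : ℝ) - kt (j - 1)) ≤ x + δ
      · rw [if_pos h, if_pos h, mul_one]
      · rw [if_neg h, if_neg h, mul_zero]
    rw [hstep]
    have hdisj : (J' : Set ℕ).PairwiseDisjoint
        (fun j => Set.Ioc ((kt (j-1) : ℝ) / Mn) ((kt j : ℝ) / Mn)) := by
      intro j hj j' hj' hne
      have hjI : j ∈ Finset.Icc 1 mn := Finset.mem_of_mem_filter j (Finset.mem_coe.1 hj)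
      have hj'I : j' ∈ Finset.Icc 1 mn := Finset.mem_of_mem_filter j' (Finset.mem_coe.1 hj')
      rw [Finset.mem_Icc] at hjI hj'I
      have key : ∀ a b : ℕ, 1 ≤ a → a ≤ mn → 1 ≤ b → b ≤ mn → a < b →
          Disjoint (Set.Ioc ((kt (a-1) : ℝ) / Mn) ((kt a : ℝ) / Mn))
            (Set.Ioc ((kt (b-1) : ℝ) / Mn) ((kt b : ℝ) / Mn)) := by
        intro a b ha1 ham hb1 hbm hab
        rw [Set.Ioc_disjoint_Ioc]
        have hk1 : kt a ≤ kt (b-1) := hkmon a (b-1) (by omega) (by omega)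
        have hk2 : (kt a : ℝ) / Mn ≤ (kt (b-1) : ℝ) / Mn := by
          have hcast : (kt a : ℝ) ≤ (kt (b-1) : ℝ) := by exact_mod_cast hk1
          gcongr
        calc min ((kt a : ℝ) / Mn) ((kt b : ℝ) / Mn) ≤ (kt a : ℝ) / Mn := min_le_left _ _
          _ ≤ (kt (b-1) : ℝ) / Mn := hk2
          _ ≤ max ((kt (a-1) : ℝ) / Mn) ((kt (b-1) : ℝ) / Mn) := le_max_right _ _
      rcases lt_or_gt_of_ne hne with h | h
      · exact key j j' hjI.1 hjI.2 hj'I.1 hj'I.2 h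
      · exact (key j' j hj'I.1 hj'I.2 hjI.1 hjI.2 h).symm
    have hvol : ∀ j ∈ J', volume (Set.Ioc ((kt (j-1) : ℝ) / Mn) ((kt j : ℝ) / Mn))
        = ENNReal.ofReal (((kt j : ℝ) - kt (j - 1)) / Mn) := by
      intro j hj
      rw [Real.volume_Ioc]
      congr 1
      ring
    have hsum_eq : ∑ j ∈ J', (((kt j : ℝ) - kt (j - 1)) / Mn)
        = (volume (⋃ j ∈ J', Set.Ioc ((kt (j-1) : ℝ) / Mn) ((kt j : ℝ) / Mn))).toReal := by
      rw [measure_biUnion_finset hdisj (fun j _ => measurableSet_Ioc)]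
      rw [Finset.sum_congr rfl hvol]
      rw [ENNReal.toReal_sum (fun j _ => ENNReal.ofReal_ne_top)]
      refine (Finset.sum_congr rfl fun j hj => ?_).symm
      rw [ENNReal.toReal_ofReal]
      have := hΔpos j (Finset.mem_of_mem_filter j hj)
      positivity
    rw [hsum_eq, hFdef]
    rw [Measure.restrict_apply' measurableSet_Ioc]
    have hsubset : (⋃ j ∈ J', Set.Ioc ((kt (j-1) : ℝ) / Mn) ((kt j : ℝ) / Mn))
        ⊆ {u | g u ≤ x + (δ + η)} ∩ Set.Ioc 0 1 := by
      intro u hu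
      simp only [Set.mem_iUnion] at hu
      obtain ⟨j, hjJ, hju⟩ := hu
      have hjI : j ∈ Finset.Icc 1 mn := Finset.mem_of_mem_filter j hjJ
      have hcl := hclose j hjI u hju
      have hAle : (Mn : ℝ) * (∑ i ∈ Finset.Ioc (kt (j - 1)) (kt j), pt i) /
          ((kt j : ℝ) - kt (j - 1)) ≤ x + δ := (Finset.mem_filter.1 hjJ).2
      constructor
      · have : g u - (Mn : ℝ) * (∑ i ∈ Finset.Ioc (kt (j - 1)) (kt j), pt i) /
            ((kt j : ℝ) - kt (j - 1)) ≤ η := by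
          have := neg_le_of_abs_le hcl
          linarith
        simp only [Set.mem_setOf_eq]
        linarith
      · exact hIoc01 j hjI hju
    apply ENNReal.toReal_mono
    · have : volume ({u | g u ≤ x + (δ + η)} ∩ Set.Ioc (0:ℝ) 1) ≤ volume (Set.Ioc (0:ℝ) 1) :=
        measure_mono Set.inter_subset_right
      rw [Real.volume_Ioc] at this
      exact ne_top_of_le_ne_top ENNReal.ofReal_ne_top this
    · exact measure_mono hsubset
  -- comparison F below ≤ G
  have hGF2 : F (x - (δ + η)) ≤ ∑ j ∈ Finset.Icc 1 mn, (((kt j : ℝ) - kt (j - 1)) / Mn) *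
      (if (Mn : ℝ) * (∑ i ∈ Finset.Ioc (kt (j - 1)) (kt j), pt i) / ((kt j : ℝ) - kt (j - 1))
        ≤ x - δ then (1:ℝ) else 0) := by
    have hcover : Set.Ioc (0:ℝ) 1 ⊆
        ⋃ j ∈ Finset.Icc 1 mn, Set.Ioc ((kt (j-1) : ℝ) / Mn) ((kt j : ℝ) / Mn) := by
      have h0 : ((kt 0 : ℝ) / Mn) = 0 := by rw [hk0]; simp
      have h1 : ((kt mn : ℝ) / Mn) = 1 := by rw [hkmn]; field_simp
      have := Ioc_cover (fun j => (kt j : ℝ) / Mn) mn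
      rw [h0, h1] at this
      exact this
    rw [hFdef, Measure.restrict_apply' measurableSet_Ioc]
    set S : Set ℝ := {u | g u ≤ x - (δ + η)} with hS
    have hsub2 : S ∩ Set.Ioc 0 1 ⊆
        ⋃ j ∈ Finset.Icc 1 mn, (S ∩ Set.Ioc ((kt (j-1) : ℝ) / Mn) ((kt j : ℝ) / Mn)) := by
      intro u hu
      have := hcover hu.2
      simp only [Set.mem_iUnion] at this ⊢
      obtain ⟨j, hj, hju⟩ := this
      exact ⟨j, hj, hu.1, hju⟩
    have hfin : ∀ j ∈ Finset.Icc 1 mn,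
        volume (S ∩ Set.Ioc ((kt (j-1) : ℝ) / Mn) ((kt j : ℝ) / Mn)) ≠ ⊤ := by
      intro j hj
      refine ne_top_of_le_ne_top ?_ (measure_mono Set.inter_subset_right)
      rw [Real.volume_Ioc]
      exact ENNReal.ofReal_ne_top
    calc (volume (S ∩ Set.Ioc (0:ℝ) 1)).toReal
        ≤ (∑ j ∈ Finset.Icc 1 mn,
            volume (S ∩ Set.Ioc ((kt (j-1) : ℝ) / Mn) ((kt j : ℝ) / Mn))).toReal := by
          apply ENNReal.toReal_mono
          · exact ENNReal.sum_ne_top.2 hfin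
          · exact le_trans (measure_mono hsub2) (measure_biUnion_finset_le _ _)
      _ = ∑ j ∈ Finset.Icc 1 mn,
            (volume (S ∩ Set.Ioc ((kt (j-1) : ℝ) / Mn) ((kt j : ℝ) / Mn))).toReal :=
          ENNReal.toReal_sum hfin
      _ ≤ ∑ j ∈ Finset.Icc 1 mn, (((kt j : ℝ) - kt (j - 1)) / Mn) *
          (if (Mn : ℝ) * (∑ i ∈ Finset.Ioc (kt (j - 1)) (kt j), pt i) /
              ((kt j : ℝ) - kt (j - 1)) ≤ x - δ then (1:ℝ) else 0) := by
          apply Finset.sum_le_sum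
          intro j hj
          by_cases hne : (S ∩ Set.Ioc ((kt (j-1) : ℝ) / Mn) ((kt j : ℝ) / Mn)).Nonempty
          · obtain ⟨u, huS, huI⟩ := hne
            have hcl := hclose j hj u huI
            have hgu : g u ≤ x - (δ + η) := huS
            have hA : (Mn : ℝ) * (∑ i ∈ Finset.Ioc (kt (j - 1)) (kt j), pt i) /
                ((kt j : ℝ) - kt (j - 1)) ≤ x - δ := by
              have := le_of_abs_le hcl
              linarith
            rw [if_pos hA, mul_one]
            have h1 : volume (S ∩ Set.Ioc ((kt (j-1) : ℝ) / Mn) ((kt j : ℝ) / Mn))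
                ≤ volume (Set.Ioc ((kt (j-1) : ℝ) / Mn) ((kt j : ℝ) / Mn)) :=
              measure_mono Set.inter_subset_right
            have h2 : (volume (Set.Ioc ((kt (j-1) : ℝ) / Mn) ((kt j : ℝ) / Mn))).toReal
                = ((kt j : ℝ) - kt (j - 1)) / Mn := by
              rw [Real.volume_Ioc, ENNReal.toReal_ofReal]
              · ring
              · have hd := hΔpos j hj
                have heq : (kt j : ℝ)/(Mn:ℝ) - (kt (j-1) : ℝ)/(Mn:ℝ)
                    = ((kt j : ℝ) - (kt (j-1) : ℝ))/(Mn:ℝ) := by ring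
                rw [heq]
                exact div_nonneg hd.le hMr.le
            rw [← h2]
            apply ENNReal.toReal_mono _ h1
            rw [Real.volume_Ioc]
            exact ENNReal.ofReal_ne_top
          · rw [Set.not_nonempty_iff_eq_empty] at hne
            rw [hne]
            simp only [measure_empty, ENNReal.toReal_zero]
            have hw : 0 ≤ ((kt j : ℝ) - kt (j - 1)) / Mn := by
              have := hΔpos j hj
              positivity
            positivity
  -- pointwise implication
  have hpoint : ∀ Y : ℕ → ℝ,
      (∑ j ∈ Finset.Icc 1 mn, (((kt j : ℝ) - kt (j - 1)) / Mn) *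
        (if δ < |(Mn : ℝ) * Y j / (((Nn : ℝ) + 1) * ((kt j : ℝ) - kt (j - 1))) -
          (Mn : ℝ) * (∑ i ∈ Finset.Ioc (kt (j - 1)) (kt j), pt i) /
            ((kt j : ℝ) - kt (j - 1))| then (1:ℝ) else 0)) ≤ θ →
      |(1 / (Mn : ℝ)) * (∑ j ∈ Finset.Icc 1 mn, ((kt j : ℝ) - kt (j - 1)) *
        (if (Mn : ℝ) * Y j / (((Nn : ℝ) + 1) * ((kt j : ℝ) - kt (j - 1))) ≤ x then (1:ℝ) else 0))
        - F x| ≤ ε := by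
    intro Y hbad
    have hW : ∀ j ∈ Finset.Icc 1 mn, (0:ℝ) ≤ ((kt j:ℝ) - kt (j-1))/Mn :=
      fun j hj => div_nonneg (hΔpos j hj).le hMr.le
    have hrw : (1 / (Mn : ℝ)) * (∑ j ∈ Finset.Icc 1 mn, ((kt j : ℝ) - kt (j - 1)) *
        (if (Mn : ℝ) * Y j / (((Nn : ℝ) + 1) * ((kt j : ℝ) - kt (j - 1))) ≤ x then (1:ℝ) else 0))
        = ∑ j ∈ Finset.Icc 1 mn, (((kt j : ℝ) - kt (j - 1)) / Mn) *
        (if (Mn : ℝ) * Y j / (((Nn : ℝ) + 1) * ((kt j : ℝ) - kt (j - 1))) ≤ x then (1:ℝ) else 0) := by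
      rw [Finset.mul_sum]
      exact Finset.sum_congr rfl fun j _ => by ring
    rw [hrw]
    have claim1 : ∀ j ∈ Finset.Icc 1 mn, (((kt j : ℝ) - kt (j - 1)) / Mn) *
        (if (Mn : ℝ) * Y j / (((Nn : ℝ) + 1) * ((kt j : ℝ) - kt (j - 1))) ≤ x then (1:ℝ) else 0)
        ≤ (((kt j : ℝ) - kt (j - 1)) / Mn) *
          (if (Mn : ℝ) * (∑ i ∈ Finset.Ioc (kt (j - 1)) (kt j), pt i) /
            ((kt j : ℝ) - kt (j - 1)) ≤ x + δ then (1:ℝ) else 0)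
          + (((kt j : ℝ) - kt (j - 1)) / Mn) *
          (if δ < |(Mn : ℝ) * Y j / (((Nn : ℝ) + 1) * ((kt j : ℝ) - kt (j - 1))) -
            (Mn : ℝ) * (∑ i ∈ Finset.Ioc (kt (j - 1)) (kt j), pt i) /
              ((kt j : ℝ) - kt (j - 1))| then (1:ℝ) else 0) := by
      intro j hj
      have hWj := hW j hj
      by_cases h1 : (Mn : ℝ) * Y j / (((Nn : ℝ) + 1) * ((kt j : ℝ) - kt (j - 1))) ≤ x
      · rw [if_pos h1, mul_one]
        by_cases h2 : δ < |(Mn : ℝ) * Y j / (((Nn : ℝ) + 1) * ((kt j : ℝ) - kt (j - 1))) -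
            (Mn : ℝ) * (∑ i ∈ Finset.Ioc (kt (j - 1)) (kt j), pt i) /
              ((kt j : ℝ) - kt (j - 1))|
        · rw [if_pos h2, mul_one]
          have h0 : (0:ℝ) ≤ (if (Mn : ℝ) * (∑ i ∈ Finset.Ioc (kt (j - 1)) (kt j), pt i) /
              ((kt j : ℝ) - kt (j - 1)) ≤ x + δ then (1:ℝ) else 0) := by
            split_ifs <;> norm_num
          nlinarith [mul_nonneg hWj h0]
        · push_neg at h2
          have h3 : (Mn : ℝ) * (∑ i ∈ Finset.Ioc (kt (j - 1)) (kt j), pt i) /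
              ((kt j : ℝ) - kt (j - 1)) ≤ x + δ := by
            have := le_of_abs_le h2
            have := neg_le_of_abs_le h2
            linarith
          rw [if_pos h3, mul_one, if_neg (not_lt.2 h2), mul_zero]
          linarith
      · rw [if_neg h1, mul_zero]
        have h0a : (0:ℝ) ≤ (if (Mn : ℝ) * (∑ i ∈ Finset.Ioc (kt (j - 1)) (kt j), pt i) /
            ((kt j : ℝ) - kt (j - 1)) ≤ x + δ then (1:ℝ) else 0) := by split_ifs <;> norm_num
        have h0b : (0:ℝ) ≤ (if δ < |(Mn : ℝ) * Y j / (((Nn : ℝ) + 1) * ((kt j : ℝ) - kt (j - 1))) -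
            (Mn : ℝ) * (∑ i ∈ Finset.Ioc (kt (j - 1)) (kt j), pt i) /
              ((kt j : ℝ) - kt (j - 1))| then (1:ℝ) else 0) := by split_ifs <;> norm_num
        nlinarith [mul_nonneg hWj h0a, mul_nonneg hWj h0b]
    have claim2 : ∀ j ∈ Finset.Icc 1 mn, (((kt j : ℝ) - kt (j - 1)) / Mn) *
        (if (Mn : ℝ) * (∑ i ∈ Finset.Ioc (kt (j - 1)) (kt j), pt i) /
            ((kt j : ℝ) - kt (j - 1)) ≤ x - δ then (1:ℝ) else 0)
        ≤ (((kt j : ℝ) - kt (j - 1)) / Mn) *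
          (if (Mn : ℝ) * Y j / (((Nn : ℝ) + 1) * ((kt j : ℝ) - kt (j - 1))) ≤ x then (1:ℝ) else 0)
          + (((kt j : ℝ) - kt (j - 1)) / Mn) *
          (if δ < |(Mn : ℝ) * Y j / (((Nn : ℝ) + 1) * ((kt j : ℝ) - kt (j - 1))) -
            (Mn : ℝ) * (∑ i ∈ Finset.Ioc (kt (j - 1)) (kt j), pt i) /
              ((kt j : ℝ) - kt (j - 1))| then (1:ℝ) else 0) := by
      intro j hj
      have hWj := hW j hj
      by_cases h1 : (Mn : ℝ) * (∑ i ∈ Finset.Ioc (kt (j - 1)) (kt j), pt i) /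
          ((kt j : ℝ) - kt (j - 1)) ≤ x - δ
      · rw [if_pos h1, mul_one]
        by_cases h2 : δ < |(Mn : ℝ) * Y j / (((Nn : ℝ) + 1) * ((kt j : ℝ) - kt (j - 1))) -
            (Mn : ℝ) * (∑ i ∈ Finset.Ioc (kt (j - 1)) (kt j), pt i) /
              ((kt j : ℝ) - kt (j - 1))|
        · rw [if_pos h2, mul_one]
          have h0 : (0:ℝ) ≤ (if (Mn : ℝ) * Y j / (((Nn : ℝ) + 1) * ((kt j : ℝ) - kt (j - 1)))
              ≤ x then (1:ℝ) else 0) := by split_ifs <;> norm_num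
          nlinarith [mul_nonneg hWj h0]
        · push_neg at h2
          have h3 : (Mn : ℝ) * Y j / (((Nn : ℝ) + 1) * ((kt j : ℝ) - kt (j - 1))) ≤ x := by
            have := le_of_abs_le h2
            have := neg_le_of_abs_le h2
            linarith
          rw [if_pos h3, mul_one, if_neg (not_lt.2 h2), mul_zero]
          linarith
      · rw [if_neg h1, mul_zero]
        have h0a : (0:ℝ) ≤ (if (Mn : ℝ) * Y j / (((Nn : ℝ) + 1) * ((kt j : ℝ) - kt (j - 1)))
            ≤ x then (1:ℝ) else 0) := by split_ifs <;> norm_num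
        have h0b : (0:ℝ) ≤ (if δ < |(Mn : ℝ) * Y j / (((Nn : ℝ) + 1) * ((kt j : ℝ) - kt (j - 1))) -
            (Mn : ℝ) * (∑ i ∈ Finset.Ioc (kt (j - 1)) (kt j), pt i) /
              ((kt j : ℝ) - kt (j - 1))| then (1:ℝ) else 0) := by split_ifs <;> norm_num
        nlinarith [mul_nonneg hWj h0a, mul_nonneg hWj h0b]
    have hsum1 := Finset.sum_le_sum claim1
    have hsum2 := Finset.sum_le_sum claim2
    rw [Finset.sum_add_distrib] at hsum1 hsum2
    rw [abs_le]
    constructor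
    · linarith [hsum2, hGF2, hFlo, hbad]
    · linarith [hsum1, hGF1, hFup, hbad]
  -- event inclusion and measure bound
  set Q : (ℕ → ℕ) → Prop := fun c => θ < ∑ j ∈ Finset.Icc 1 mn,
    (((kt j : ℝ) - kt (j - 1)) / Mn) *
      (if δ < |(Mn : ℝ) * (∑ i ∈ Finset.Ioc (kt (j - 1)) (kt j), (c i : ℝ)) /
          (((Nn : ℝ) + 1) * ((kt j : ℝ) - kt (j - 1))) -
        (Mn : ℝ) * (∑ i ∈ Finset.Ioc (kt (j - 1)) (kt j), pt i) /
          ((kt j : ℝ) - kt (j - 1))| then (1:ℝ) else 0) with hQdef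
  have hincl : ∀ ω ∈ {ω | ε < |Fh ω - F x|},
      Q (fun i => if i ∈ Finset.Icc 1 Mn then Xt i ω else 0) := by
    intro ω hω
    rw [Set.mem_setOf_eq] at hω
    by_contra hnot
    simp only [hQdef] at hnot
    push_neg at hnot
    have hconv : ∀ j ∈ Finset.Icc 1 mn,
        (∑ i ∈ Finset.Ioc (kt (j - 1)) (kt j),
          (((fun i => if i ∈ Finset.Icc 1 Mn then Xt i ω else 0) i : ℕ) : ℝ))
        = ∑ i ∈ Finset.Ioc (kt (j - 1)) (kt j), (Xt i ω : ℝ) := by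
      intro j hj
      refine Finset.sum_congr rfl fun i hi => ?_
      simp only [if_pos (hTsub j hj hi)]
    have hnot2 : (∑ j ∈ Finset.Icc 1 mn, (((kt j : ℝ) - kt (j - 1)) / Mn) *
        (if δ < |(Mn : ℝ) * (∑ i ∈ Finset.Ioc (kt (j - 1)) (kt j), (Xt i ω : ℝ)) /
            (((Nn : ℝ) + 1) * ((kt j : ℝ) - kt (j - 1))) -
          (Mn : ℝ) * (∑ i ∈ Finset.Ioc (kt (j - 1)) (kt j), pt i) /
            ((kt j : ℝ) - kt (j - 1))| then (1:ℝ) else 0)) ≤ θ := by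
      refine le_trans (le_of_eq ?_) hnot
      refine Finset.sum_congr rfl fun j hj => ?_
      rw [hconv j hj]
    have := hpoint (fun j => ∑ i ∈ Finset.Ioc (kt (j - 1)) (kt j), (Xt i ω : ℝ)) hnot2
    rw [← hFh ω] at this
    linarith [this, hω]
  have hmeasure := measure_le_sum_filter P (Nn + 1) Mn pt hp1 Xt hmeasX hmultX Q
    {ω | ε < |Fh ω - F x|} hincl
  refine le_trans hmeasure (ENNReal.ofReal_le_ofReal ?_)
  -- Markov + Chebyshev
  have hf : ∀ c ∈ (Finset.Icc 1 Mn).piAntidiag (Nn + 1), 0 ≤ mpmf (Finset.Icc 1 Mn) pt (Nn+1) c :=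
    fun c _ => mpmf_nonneg hp0 _ _
  have hw : ∀ j ∈ Finset.Icc 1 mn, (0:ℝ) ≤ ((kt j:ℝ) - kt (j-1))/Mn :=
    fun j hj => div_nonneg (hΔpos j hj).le hMr.le
  have hind0 : ∀ (j : ℕ) (c : ℕ → ℕ), (0:ℝ) ≤
      (if δ < |(Mn : ℝ) * (∑ i ∈ Finset.Ioc (kt (j - 1)) (kt j), (c i : ℝ)) /
          (((Nn : ℝ) + 1) * ((kt j : ℝ) - kt (j - 1))) -
        (Mn : ℝ) * (∑ i ∈ Finset.Ioc (kt (j - 1)) (kt j), pt i) /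
          ((kt j : ℝ) - kt (j - 1))| then (1:ℝ) else 0) := by
    intro j c
    split_ifs <;> norm_num
  have hQle : ∀ c : ℕ → ℕ, Q c → θ ≤ ∑ j ∈ Finset.Icc 1 mn,
      (((kt j : ℝ) - kt (j - 1)) / Mn) *
      (if δ < |(Mn : ℝ) * (∑ i ∈ Finset.Ioc (kt (j - 1)) (kt j), (c i : ℝ)) /
          (((Nn : ℝ) + 1) * ((kt j : ℝ) - kt (j - 1))) -
        (Mn : ℝ) * (∑ i ∈ Finset.Ioc (kt (j - 1)) (kt j), pt i) /
          ((kt j : ℝ) - kt (j - 1))| then (1:ℝ) else 0) := by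
    intro c hc
    rw [hQdef] at hc
    exact le_of_lt hc
  have hmark := markov_sum ((Finset.Icc 1 Mn).piAntidiag (Nn + 1))
    (mpmf (Finset.Icc 1 Mn) pt (Nn+1)) hf (Finset.Icc 1 mn)
    (fun j => ((kt j : ℝ) - kt (j - 1)) / Mn) hw
    (fun j c => if δ < |(Mn : ℝ) * (∑ i ∈ Finset.Ioc (kt (j - 1)) (kt j), (c i : ℝ)) /
          (((Nn : ℝ) + 1) * ((kt j : ℝ) - kt (j - 1))) -
        (Mn : ℝ) * (∑ i ∈ Finset.Ioc (kt (j - 1)) (kt j), pt i) /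
          ((kt j : ℝ) - kt (j - 1))| then (1:ℝ) else 0)
    hind0 θ hθ Q hQle
  refine le_trans hmark ?_
  have hcheball : ∀ j ∈ Finset.Icc 1 mn,
      (((kt j : ℝ) - kt (j - 1)) / Mn) * (∑ c ∈ (Finset.Icc 1 Mn).piAntidiag (Nn + 1),
        mpmf (Finset.Icc 1 Mn) pt (Nn+1) c *
        (if δ < |(Mn : ℝ) * (∑ i ∈ Finset.Ioc (kt (j - 1)) (kt j), (c i : ℝ)) /
            (((Nn : ℝ) + 1) * ((kt j : ℝ) - kt (j - 1))) -
          (Mn : ℝ) * (∑ i ∈ Finset.Ioc (kt (j - 1)) (kt j), pt i) /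
            ((kt j : ℝ) - kt (j - 1))| then (1:ℝ) else 0))
      ≤ (C₀ + η) / (((Nn : ℝ) + 1) * δ ^ 2) := by
    intro j hj
    have hΔj := hΔpos j hj
    have hcheb := cheb (Finset.Icc 1 Mn) (Finset.Ioc (kt (j - 1)) (kt j)) (hTsub j hj)
      pt hp1 hp0 Nn (Mn : ℝ) ((kt j : ℝ) - kt (j - 1)) δ
      ((Mn : ℝ) * (∑ i ∈ Finset.Ioc (kt (j - 1)) (kt j), pt i) / ((kt j : ℝ) - kt (j - 1)))
      hMr hΔj hδ rfl
    have h1 : (((kt j : ℝ) - kt (j - 1)) / Mn) * (∑ c ∈ (Finset.Icc 1 Mn).piAntidiag (Nn + 1),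
        mpmf (Finset.Icc 1 Mn) pt (Nn+1) c *
        (if δ < |(Mn : ℝ) * (∑ i ∈ Finset.Ioc (kt (j - 1)) (kt j), (c i : ℝ)) /
            (((Nn : ℝ) + 1) * ((kt j : ℝ) - kt (j - 1))) -
          (Mn : ℝ) * (∑ i ∈ Finset.Ioc (kt (j - 1)) (kt j), pt i) /
            ((kt j : ℝ) - kt (j - 1))| then (1:ℝ) else 0))
        ≤ (((kt j : ℝ) - kt (j - 1)) / Mn) *
          ((∑ i ∈ Finset.Ioc (kt (j - 1)) (kt j), pt i) * (Mn:ℝ)^2 /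
            (((Nn:ℝ)+1) * ((kt j : ℝ) - kt (j - 1))^2 * δ^2)) :=
      mul_le_mul_of_nonneg_left hcheb (hw j hj)
    refine le_trans h1 ?_
    have heq : (((kt j : ℝ) - kt (j - 1)) / Mn) *
        ((∑ i ∈ Finset.Ioc (kt (j - 1)) (kt j), pt i) * (Mn:ℝ)^2 /
          (((Nn:ℝ)+1) * ((kt j : ℝ) - kt (j - 1))^2 * δ^2))
        = ((Mn : ℝ) * (∑ i ∈ Finset.Ioc (kt (j - 1)) (kt j), pt i) /
            ((kt j : ℝ) - kt (j - 1))) / (((Nn:ℝ)+1) * δ^2) := by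
      field_simp
    rw [heq]
    exact div_le_div_of_nonneg_right (hAC j hj) (by positivity)
  have hsum : ∑ j ∈ Finset.Icc 1 mn, (((kt j : ℝ) - kt (j - 1)) / Mn) *
      (∑ c ∈ (Finset.Icc 1 Mn).piAntidiag (Nn + 1), mpmf (Finset.Icc 1 Mn) pt (Nn+1) c *
        (if δ < |(Mn : ℝ) * (∑ i ∈ Finset.Ioc (kt (j - 1)) (kt j), (c i : ℝ)) /
            (((Nn : ℝ) + 1) * ((kt j : ℝ) - kt (j - 1))) -
          (Mn : ℝ) * (∑ i ∈ Finset.Ioc (kt (j - 1)) (kt j), pt i) /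
            ((kt j : ℝ) - kt (j - 1))| then (1:ℝ) else 0))
      ≤ (mn : ℝ) * ((C₀ + η) / (((Nn : ℝ) + 1) * δ ^ 2)) := by
    refine le_trans (Finset.sum_le_sum hcheball) ?_
    rw [Finset.sum_const, Nat.card_Icc]
    simp [nsmul_eq_mul]
  have hfin := mul_le_mul_of_nonneg_left hsum (show (0:ℝ) ≤ 1/θ by positivity)
  refine le_trans hfin (le_of_eq (by ring))


end Stmt16Aux

open Stmt16Aux in
/-- Consistency of the grouped cells estimator: if `m/n → 0`, the relative group sizes tend
to zero uniformly, and the parent densities converge uniformly on `(0,1]` to a continuous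
`g` on `[0,1]`, then the grouped cells estimator `F̂_M` converges in probability, at every
continuity point, to `F`, the distribution function of `g(U)` with `U` uniform on `(0,1]`. -/
theorem stmt16 (n M m : ℕ → ℕ) (hn : ∀ t, 0 < n t) (hM : ∀ t, 0 < M t) (hm : ∀ t, 0 < m t)
    (Ω : ℕ → Type*) [∀ t, MeasureSpace (Ω t)] (P : ∀ t, Measure (Ω t))
    [∀ t, IsProbabilityMeasure (P t)]
    (p : ℕ → ℕ → ℝ)
    (hp_nonneg : ∀ t, ∀ i ∈ Finset.Icc 1 (M t), 0 ≤ p t i)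
    (hp_sum : ∀ t, ∑ i ∈ Finset.Icc 1 (M t), p t i = 1)
    (X : ∀ t : ℕ, ℕ → Ω t → ℕ) (hmeas : ∀ t i, Measurable (X t i))
    (hmult : ∀ t, IsMultinomial (P t) (n t) (M t) (p t) (X t))
    (k : ℕ → ℕ → ℕ) (hk0 : ∀ t, k t 0 = 0) (hkm : ∀ t, k t (m t) = M t)
    (hkmono : ∀ t, ∀ j < m t, k t j < k t (j + 1))
    (hmn : Tendsto (fun t => (m t : ℝ) / (n t : ℝ)) atTop (nhds 0))
    (hgroups : ∀ ε > (0 : ℝ), ∃ N : ℕ, ∀ t ≥ N, ∀ j ∈ Finset.Icc 1 (m t),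
      ((k t j : ℝ) - k t (j - 1)) / (M t) ≤ ε)
    (g : ℝ → ℝ) (hg : ContinuousOn g (Set.Icc (0 : ℝ) 1))
    (gM : ℕ → ℝ → ℝ)
    (hgM : ∀ t, ∀ u : ℝ, gM t u = ∑ i ∈ Finset.Icc 1 (M t),
      (M t : ℝ) * p t i *
        (if u ∈ Set.Ioc (((i : ℝ) - 1) / (M t)) ((i : ℝ) / (M t)) then (1 : ℝ) else 0))
    (hsup : ∀ ε > (0 : ℝ), ∃ N : ℕ, ∀ t ≥ N, ∀ u ∈ Set.Ioc (0 : ℝ) 1, |gM t u - g u| ≤ ε)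
    (Fhat : ∀ t : ℕ, Ω t → ℝ → ℝ)
    (hFhat : ∀ t ω x, Fhat t ω x = (1 / (M t) : ℝ) * ∑ j ∈ Finset.Icc 1 (m t),
      ((k t j : ℝ) - k t (j - 1)) *
        (if (M t : ℝ) * (∑ i ∈ Finset.Ioc (k t (j - 1)) (k t j), (X t i ω : ℝ)) /
            ((n t : ℝ) * ((k t j : ℝ) - k t (j - 1))) ≤ x then (1 : ℝ) else 0))
    (F : ℝ → ℝ)
    (hF : ∀ x, F x = ((volume.restrict (Set.Ioc (0 : ℝ) 1)) {u | g u ≤ x}).toReal) :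
    ∀ x : ℝ, ContinuousAt F x → ∀ ε > (0 : ℝ),
      Tendsto (fun t => P t {ω | ε < |Fhat t ω x - F x|}) atTop (nhds 0) := by

  intro x hcont ε hε
  classical
  obtain ⟨δ₀, hδ₀pos, hδ₀⟩ := Metric.continuousAt_iff.1 hcont (ε/2) (by linarith)
  set δ : ℝ := δ₀/4 with hδdef
  have hδpos : 0 < δ := by positivity
  set θ : ℝ := ε/2 with hθdef
  have hθpos : 0 < θ := by positivity
  have hUC : UniformContinuousOn g (Set.Icc 0 1) :=
    isCompact_Icc.uniformContinuousOn_of_continuous hg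
  obtain ⟨ρ, hρpos, hρ⟩ := Metric.uniformContinuousOn_iff.1 hUC (δ/2) (by positivity)
  obtain ⟨C₀, hC₀⟩ := isCompact_Icc.exists_bound_of_continuousOn hg
  have hC₀0 : 0 ≤ C₀ := le_trans (norm_nonneg (g 0)) (hC₀ 0 (by constructor <;> norm_num))
  obtain ⟨N₁, hN₁⟩ := hsup (δ/2) (by positivity)
  obtain ⟨N₂, hN₂⟩ := hgroups (ρ/2) (by positivity)
  set K : ℝ := (1/θ) * (C₀ + δ) / δ^2 with hKdef
  have hupper : Tendsto (fun t => ENNReal.ofReal (K * ((m t : ℝ)/(n t : ℝ)))) atTop (nhds 0) := by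
    have h0 : Tendsto (fun t => K * ((m t:ℝ)/(n t:ℝ))) atTop (nhds (K * 0)) := hmn.const_mul K
    rw [mul_zero] at h0
    have h1 := ENNReal.tendsto_ofReal h0
    simpa using h1
  refine tendsto_of_tendsto_of_tendsto_of_le_of_le' tendsto_const_nhds hupper
    (Eventually.of_forall (fun t => zero_le)) ?_
  filter_upwards [eventually_ge_atTop N₁, eventually_ge_atTop N₂] with t ht₁ ht₂
  -- apply per_t
  set Nn : ℕ := n t - 1 with hNndef
  have hNn : n t = Nn + 1 := by
    have := hn t
    omega
  have hcast : (n t : ℝ) = (Nn : ℝ) + 1 := by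
    rw [hNn]
    push_cast
    ring
  have hmultX : IsMultinomial (P t) (Nn + 1) (M t) (p t) (X t) := by
    rw [← hNn]
    exact hmult t
  have key := per_t (P t) Nn (M t) (m t) (hM t) (p t) (hp_nonneg t) (hp_sum t)
    (X t) (hmeas t) hmultX (k t) (hk0 t) (hkm t) (hkmono t) g F x ε δ δ θ ρ C₀
    hδpos hδpos hθpos hρpos hε hC₀
    (fun u hu v hv hd => hρ u hu v hv hd)
    (gM t) (hgM t) (hN₁ t ht₁) (hN₂ t ht₂) hF
    ?_ ?_ (fun ω => Fhat t ω x) ?_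
  · refine le_trans key (ENNReal.ofReal_le_ofReal (le_of_eq ?_))
    have hnr : (n t : ℝ) ≠ 0 := by
      have := hn t
      positivity
    rw [← hcast, hKdef]
    field_simp
  · -- hFup
    have hd : dist (x + (δ + δ)) x < δ₀ := by
      rw [Real.dist_eq, show x + (δ + δ) - x = δ + δ by ring, abs_of_pos (by positivity)]
      rw [hδdef]
      linarith
    have := hδ₀ hd
    rw [Real.dist_eq, abs_lt] at this
    linarith [this.2]
  · -- hFlo
    have hd : dist (x - (δ + δ)) x < δ₀ := by
      rw [Real.dist_eq, show x - (δ + δ) - x = -(δ + δ) by ring, abs_neg,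
        abs_of_pos (by positivity)]
      rw [hδdef]
      linarith
    have := hδ₀ hd
    rw [Real.dist_eq, abs_lt] at this
    linarith [this.1]
  · -- hFh
    intro ω
    show Fhat t ω x = _
    rw [hFhat t ω x, hcast]
end

section
/- (L1 Poissonization bound for the kernel estimator.) Let (X_i) and (Y_i), 1 ≤ i ≤ M, be coupled so that either X_i ≤ Y_i for all i or X_i ≥ Y_i for all i, with Σ X_i = n, Σ Y_i = N, and N ~ Poisson(n). Let w ≥ 0 and define F̂_M(x) = (1/M) Σ_{j=1}^M 1_{[(M/(nk)) Σ_i w((j−i)/k) X_i ≤ x]} and F̃_M analogously with Y_i. Then E ∫ |F̂_M − F̃_M| dx ≤ (Σ_{ℓ ∈ ℤ} (1/k) w(ℓ/k)) · E|N − n|/n. -/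
open MeasureTheory ProbabilityTheory Finset
open scoped Nat

lemma aux_abs_sum_same_sign {ι : Type*} (s : Finset ι) (d : ι → ℝ)
    (h : (∀ i ∈ s, 0 ≤ d i) ∨ (∀ i ∈ s, d i ≤ 0)) :
    |∑ i ∈ s, d i| = ∑ i ∈ s, |d i| := by
  rcases h with h | h
  · rw [abs_of_nonneg (Finset.sum_nonneg h)]
    exact Finset.sum_congr rfl fun i hi => (abs_of_nonneg (h i hi)).symm
  · rw [abs_of_nonpos (Finset.sum_nonpos h), ← Finset.sum_neg_distrib]
    exact Finset.sum_congr rfl fun i hi => (abs_of_nonpos (h i hi)).symm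

lemma aux_abs_ite (a b x : ℝ) :
    |(if a ≤ x then (1:ℝ) else 0) - (if b ≤ x then (1:ℝ) else 0)| =
      (Set.Ico (a ⊓ b) (a ⊔ b)).indicator (fun _ => (1:ℝ)) x := by
  by_cases h1 : a ≤ x <;> by_cases h2 : b ≤ x <;>
    simp only [h1, h2, if_true, if_false, Set.indicator_apply,
      sub_zero, zero_sub, sub_self, abs_zero, abs_one, abs_neg]
  · rw [if_neg fun hm => absurd hm.2 (not_lt.2 (sup_le h1 h2))]
  · rw [if_pos ⟨le_trans inf_le_left h1, lt_of_lt_of_le (lt_of_not_ge h2) le_sup_right⟩]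
  · rw [if_pos ⟨le_trans inf_le_right h2, lt_of_lt_of_le (lt_of_not_ge h1) le_sup_left⟩]
  · rw [if_neg fun hm => absurd hm.1 (not_le.2 (lt_inf_iff.2 ⟨lt_of_not_ge h1, lt_of_not_ge h2⟩))]

lemma aux_integral_abs_ite (a b : ℝ) :
    ∫ x : ℝ, |(if a ≤ x then (1:ℝ) else 0) - (if b ≤ x then (1:ℝ) else 0)| = |a - b| := by
  simp only [aux_abs_ite]
  rw [integral_indicator_const (1:ℝ) measurableSet_Ico, Real.volume_real_Ico_of_le inf_le_sup, smul_eq_mul, mul_one]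
  rcases le_total a b with h | h
  · rw [inf_of_le_left h, sup_of_le_right h, abs_sub_comm, abs_of_nonneg (by linarith)]
  · rw [inf_of_le_right h, sup_of_le_left h, abs_of_nonneg (by linarith)]

lemma aux_integrable_abs_ite (a b : ℝ) :
    Integrable (fun x : ℝ => |(if a ≤ x then (1:ℝ) else 0) - (if b ≤ x then (1:ℝ) else 0)|) := by
  simp only [aux_abs_ite]
  rw [integrable_indicator_iff measurableSet_Ico]
  exact integrableOn_const measure_Ico_lt_top.ne

lemma aux_summable_poisson (r : NNReal) :
    Summable (fun m : ℕ => (m : ℝ) * poissonPMFReal r m) := by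
  rw [← summable_nat_add_iff 1]
  have : (fun m : ℕ => ((m + 1 : ℕ) : ℝ) * poissonPMFReal r (m + 1)) =
      fun m : ℕ => (Real.exp (-(r : ℝ)) * (r : ℝ)) * ((r : ℝ) ^ m / (Nat.factorial m : ℝ)) := by
    funext m
    unfold poissonPMFReal
    rw [Nat.factorial_succ]
    have hm : ((m : ℝ) + 1) ≠ 0 := by positivity
    have hf : (Nat.factorial m : ℝ) ≠ 0 := by positivity
    push_cast
    field_simp
    ring
  rw [this]
  exact (Real.summable_pow_div_factorial _).mul_left _

lemma aux_integrable_poisson (r : NNReal) :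
    Integrable (fun m : ℕ => (m : ℝ)) (poissonMeasure r) := by
  refine ⟨measurable_from_nat.aestronglyMeasurable, ?_⟩
  have key : ∀ m : ℕ, ‖(m : ℝ)‖ₑ * poissonMeasure r {m}
      = ENNReal.ofReal ((m : ℝ) * poissonPMFReal r m) := by
    intro m
    have hmeas : poissonMeasure r {m} = ENNReal.ofReal (poissonPMFReal r m) := by
      rw [poissonMeasure_singleton]
      rfl
    rw [hmeas, ENNReal.ofReal_mul (Nat.cast_nonneg m),
      Real.enorm_eq_ofReal (Nat.cast_nonneg m)]
  rw [HasFiniteIntegral, lintegral_countable']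
  simp only [key]
  rw [← ENNReal.ofReal_tsum_of_nonneg
    (fun m => mul_nonneg (Nat.cast_nonneg m) poissonPMFReal_nonneg) (aux_summable_poisson r)]
  exact ENNReal.ofReal_lt_top

/-- L1 Poissonization bound for the kernel estimator: if `X_i` and `Y_i` are coupled so that
`X_i ≤ Y_i` for all `i` or `X_i ≥ Y_i` for all `i` (pointwise), with `Σ X_i = n`,
`Σ Y_i = N` and `N ~ Poisson(n)`, then for the kernel estimator `F̂_M` and its Poissonized
version `F̃_M`, `E ∫ |F̂_M − F̃_M| dx ≤ (Σ_{ℓ∈ℤ} (1/k) w(ℓ/k)) · E|N − n| / n`. -/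
theorem stmt17 {Ω : Type*} [MeasureSpace Ω] (P : Measure Ω) [IsProbabilityMeasure P]
    (M n : ℕ) (hM : 0 < M) (hn : 0 < n) (kb : ℝ) (hkb : 0 < kb)
    (w : ℝ → ℝ) (hw_nonneg : ∀ u, 0 ≤ w u)
    (hw_summable : Summable (fun ℓ : ℤ => w ((ℓ : ℝ) / kb)))
    (X Y : ℕ → Ω → ℕ) (hmeasX : ∀ i, Measurable (X i)) (hmeasY : ∀ i, Measurable (Y i))
    (hcoup : ∀ ω, (∀ i ∈ Finset.Icc 1 M, X i ω ≤ Y i ω) ∨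
      (∀ i ∈ Finset.Icc 1 M, Y i ω ≤ X i ω))
    (hX : ∀ ω, ∑ i ∈ Finset.Icc 1 M, X i ω = n)
    (N : Ω → ℕ) (hN : ∀ ω, N ω = ∑ i ∈ Finset.Icc 1 M, Y i ω)
    (hpois : Measure.map N P = poissonMeasure (n : NNReal))
    (Fhat Ftilde : Ω → ℝ → ℝ)
    (hFhat : ∀ ω x, Fhat ω x = (1 / M : ℝ) * ∑ j ∈ Finset.Icc 1 M,
      (if (M : ℝ) / ((n : ℝ) * kb) *
          ∑ i ∈ Finset.Icc 1 M, w (((j : ℝ) - (i : ℝ)) / kb) * (X i ω : ℝ) ≤ x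
        then (1 : ℝ) else 0))
    (hFtilde : ∀ ω x, Ftilde ω x = (1 / M : ℝ) * ∑ j ∈ Finset.Icc 1 M,
      (if (M : ℝ) / ((n : ℝ) * kb) *
          ∑ i ∈ Finset.Icc 1 M, w (((j : ℝ) - (i : ℝ)) / kb) * (Y i ω : ℝ) ≤ x
        then (1 : ℝ) else 0)) :
    ∫ ω, (∫ x : ℝ, |Fhat ω x - Ftilde ω x|) ∂P ≤
      (∑' ℓ : ℤ, (1 / kb) * w ((ℓ : ℝ) / kb)) *
        (∫ ω, |(N ω : ℝ) - (n : ℝ)| ∂P) / n := by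
  set S : ℝ := ∑' ℓ : ℤ, w ((ℓ : ℝ) / kb) with hS
  have hS_nonneg : 0 ≤ S := tsum_nonneg fun ℓ => hw_nonneg _
  have hMne : (M : ℝ) ≠ 0 := Nat.cast_ne_zero.2 hM.ne'
  have hnne : (n : ℝ) ≠ 0 := Nat.cast_ne_zero.2 hn.ne'
  have hsum_bound : ∀ i : ℕ, ∑ j ∈ Finset.Icc 1 M, w (((j:ℝ) - (i:ℝ)) / kb) ≤ S := by
    intro i
    have h1 : ∑ j ∈ Finset.Icc 1 M, w (((j:ℝ) - (i:ℝ)) / kb)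
        = ∑ ℓ ∈ (Finset.Icc 1 M).image (fun j : ℕ => (j:ℤ) - (i:ℤ)), w ((ℓ:ℝ) / kb) := by
      rw [Finset.sum_image (fun x _ y _ h => by omega)]
      refine Finset.sum_congr rfl fun j _ => by congr 1; push_cast; ring
    rw [h1]
    exact Summable.sum_le_tsum _ (fun ℓ _ => hw_nonneg _) hw_summable
  -- pointwise bound
  have hpoint : ∀ ω, (∫ x : ℝ, |Fhat ω x - Ftilde ω x|) ≤
      S / ((n:ℝ) * kb) * |(N ω : ℝ) - (n : ℝ)| := by
    intro ω
    set a : ℕ → ℝ := fun j => (M : ℝ) / ((n : ℝ) * kb) *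
      ∑ i ∈ Finset.Icc 1 M, w (((j : ℝ) - (i : ℝ)) / kb) * (X i ω : ℝ) with ha
    set b : ℕ → ℝ := fun j => (M : ℝ) / ((n : ℝ) * kb) *
      ∑ i ∈ Finset.Icc 1 M, w (((j : ℝ) - (i : ℝ)) / kb) * (Y i ω : ℝ) with hb
    have hcnn : (0:ℝ) ≤ (M:ℝ) / ((n:ℝ) * kb) := by positivity
    have habs : ∀ x : ℝ, |Fhat ω x - Ftilde ω x| ≤ (1 / M : ℝ) * ∑ j ∈ Finset.Icc 1 M,
        |(if a j ≤ x then (1:ℝ) else 0) - (if b j ≤ x then (1:ℝ) else 0)| := by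
      intro x
      rw [hFhat, hFtilde, ← mul_sub, ← Finset.sum_sub_distrib, abs_mul,
        abs_of_nonneg (by positivity : (0:ℝ) ≤ 1 / (M:ℝ))]
      exact mul_le_mul_of_nonneg_left (Finset.abs_sum_le_sum_abs _ _) (by positivity)
    have hInt1 : (∫ x : ℝ, |Fhat ω x - Ftilde ω x|) ≤
        (1 / M : ℝ) * ∑ j ∈ Finset.Icc 1 M, |a j - b j| := by
      have hgi : Integrable (fun x : ℝ => (1 / M : ℝ) * ∑ j ∈ Finset.Icc 1 M,
          |(if a j ≤ x then (1:ℝ) else 0) - (if b j ≤ x then (1:ℝ) else 0)|) :=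
        (integrable_finset_sum _ fun j _ => aux_integrable_abs_ite (a j) (b j)).const_mul _
      calc (∫ x : ℝ, |Fhat ω x - Ftilde ω x|)
          ≤ ∫ x : ℝ, (1 / M : ℝ) * ∑ j ∈ Finset.Icc 1 M,
              |(if a j ≤ x then (1:ℝ) else 0) - (if b j ≤ x then (1:ℝ) else 0)| :=
            integral_mono_of_nonneg (Filter.Eventually.of_forall fun x => abs_nonneg _)
              hgi (Filter.Eventually.of_forall habs)
        _ = (1 / M : ℝ) * ∑ j ∈ Finset.Icc 1 M, |a j - b j| := by
            rw [integral_const_mul,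
              integral_finset_sum _ fun j _ => aux_integrable_abs_ite (a j) (b j)]
            simp only [aux_integral_abs_ite]
    have hab : ∀ j : ℕ, a j - b j = (M:ℝ) / ((n:ℝ) * kb) *
        ∑ i ∈ Finset.Icc 1 M, w (((j:ℝ) - (i:ℝ)) / kb) * ((X i ω : ℝ) - (Y i ω : ℝ)) := by
      intro j
      simp only [ha, hb, ← mul_sub, ← Finset.sum_sub_distrib]
    have hsign : ∀ j : ℕ,
        |∑ i ∈ Finset.Icc 1 M, w (((j:ℝ) - (i:ℝ)) / kb) * ((X i ω : ℝ) - (Y i ω : ℝ))| =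
        ∑ i ∈ Finset.Icc 1 M, w (((j:ℝ) - (i:ℝ)) / kb) * |(X i ω : ℝ) - (Y i ω : ℝ)| := by
      intro j
      rw [aux_abs_sum_same_sign]
      · exact Finset.sum_congr rfl fun i _ => by
          rw [abs_mul, abs_of_nonneg (hw_nonneg _)]
      · rcases hcoup ω with h | h
        · exact Or.inr fun i hi => mul_nonpos_of_nonneg_of_nonpos (hw_nonneg _)
            (sub_nonpos.2 (Nat.cast_le.2 (h i hi)))
        · exact Or.inl fun i hi => mul_nonneg (hw_nonneg _)
            (sub_nonneg.2 (Nat.cast_le.2 (h i hi)))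
    have hsum_d : ∑ i ∈ Finset.Icc 1 M, |(X i ω : ℝ) - (Y i ω : ℝ)| =
        |(N ω : ℝ) - (n : ℝ)| := by
      rw [← aux_abs_sum_same_sign]
      · rw [Finset.sum_sub_distrib, ← Nat.cast_sum, ← Nat.cast_sum, hX ω, ← hN ω, abs_sub_comm]
      · rcases hcoup ω with h | h
        · exact Or.inr fun i hi => sub_nonpos.2 (Nat.cast_le.2 (h i hi))
        · exact Or.inl fun i hi => sub_nonneg.2 (Nat.cast_le.2 (h i hi))
    have hdouble : ∑ j ∈ Finset.Icc 1 M, ∑ i ∈ Finset.Icc 1 M,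
        w (((j:ℝ) - (i:ℝ)) / kb) * |(X i ω : ℝ) - (Y i ω : ℝ)| ≤
        |(N ω : ℝ) - (n : ℝ)| * S := by
      rw [Finset.sum_comm]
      calc ∑ i ∈ Finset.Icc 1 M, ∑ j ∈ Finset.Icc 1 M,
            w (((j:ℝ) - (i:ℝ)) / kb) * |(X i ω : ℝ) - (Y i ω : ℝ)|
          = ∑ i ∈ Finset.Icc 1 M, |(X i ω : ℝ) - (Y i ω : ℝ)| *
              ∑ j ∈ Finset.Icc 1 M, w (((j:ℝ) - (i:ℝ)) / kb) := by
            refine Finset.sum_congr rfl fun i _ => ?_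
            rw [Finset.mul_sum]
            exact Finset.sum_congr rfl fun j _ => mul_comm _ _
        _ ≤ ∑ i ∈ Finset.Icc 1 M, |(X i ω : ℝ) - (Y i ω : ℝ)| * S :=
            Finset.sum_le_sum fun i _ =>
              mul_le_mul_of_nonneg_left (hsum_bound i) (abs_nonneg _)
        _ = |(N ω : ℝ) - (n : ℝ)| * S := by rw [← Finset.sum_mul, hsum_d]
    calc (∫ x : ℝ, |Fhat ω x - Ftilde ω x|)
        ≤ (1 / M : ℝ) * ∑ j ∈ Finset.Icc 1 M, |a j - b j| := hInt1
      _ = (1 / M : ℝ) * ((M:ℝ) / ((n:ℝ) * kb)) * ∑ j ∈ Finset.Icc 1 M,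
            ∑ i ∈ Finset.Icc 1 M,
              w (((j:ℝ) - (i:ℝ)) / kb) * |(X i ω : ℝ) - (Y i ω : ℝ)| := by
          have hentry : ∑ j ∈ Finset.Icc 1 M, |a j - b j| =
              ((M:ℝ) / ((n:ℝ) * kb)) * ∑ j ∈ Finset.Icc 1 M, ∑ i ∈ Finset.Icc 1 M,
                w (((j:ℝ) - (i:ℝ)) / kb) * |(X i ω : ℝ) - (Y i ω : ℝ)| := by
            rw [Finset.mul_sum]
            refine Finset.sum_congr rfl fun j _ => ?_
            rw [hab j, abs_mul, abs_of_nonneg hcnn, hsign j]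
          rw [hentry, ← mul_assoc]
      _ ≤ (1 / M : ℝ) * ((M:ℝ) / ((n:ℝ) * kb)) * (|(N ω : ℝ) - (n : ℝ)| * S) :=
          mul_le_mul_of_nonneg_left hdouble (by positivity)
      _ = S / ((n:ℝ) * kb) * |(N ω : ℝ) - (n : ℝ)| := by field_simp
  -- integrability of |N - n|
  have hNmeas : Measurable N := by
    have hNe : N = fun ω => ∑ i ∈ Finset.Icc 1 M, Y i ω := funext hN
    rw [hNe]
    exact Finset.measurable_sum _ fun i _ => hmeasY i
  have hintN : Integrable (fun ω => (N ω : ℝ)) P := by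
    have h1 := aux_integrable_poisson (n : NNReal)
    rw [← hpois] at h1
    exact (integrable_map_measure measurable_from_nat.aestronglyMeasurable
      hNmeas.aemeasurable).mp h1
  have hint : Integrable (fun ω => |(N ω : ℝ) - (n : ℝ)|) P :=
    (hintN.sub (integrable_const _)).abs
  have hfinal : ∫ ω, (∫ x : ℝ, |Fhat ω x - Ftilde ω x|) ∂P ≤
      S / ((n:ℝ) * kb) * ∫ ω, |(N ω : ℝ) - (n : ℝ)| ∂P := by
    rw [← integral_const_mul]
    exact integral_mono_of_nonneg
      (Filter.Eventually.of_forall fun ω => integral_nonneg fun x => abs_nonneg _)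
      (hint.const_mul _) (Filter.Eventually.of_forall hpoint)
  calc ∫ ω, (∫ x : ℝ, |Fhat ω x - Ftilde ω x|) ∂P
      ≤ S / ((n:ℝ) * kb) * ∫ ω, |(N ω : ℝ) - (n : ℝ)| ∂P := hfinal
    _ = (∑' ℓ : ℤ, (1 / kb) * w ((ℓ : ℝ) / kb)) *
        (∫ ω, |(N ω : ℝ) - (n : ℝ)| ∂P) / n := by
        rw [tsum_mul_left, ← hS]
        field_simp
        try ring
        try exact Or.inl trivial
end
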